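/- arXiv:2010.16089 — 4 statements merged into one kernel-verified Lean document; each statement's English description precedes it below -/
import Mathlib

section
/- The map d̃_SP(e) := C-collapse of (e^+)^- from special type-D partitions of size 2n to metaplectic special partitions of size 2n is order preserving: if e ≼ e' in the dominance order, then d̃_SP(e) ≼ d̃_SP(e'). -/
/-!
Partitions (Young diagrams) are represented as antitone, eventually-zero
functions `f : ℕ → ℕ`, where `f i` is the length of the `(i+1)`-st row.
-/

/-- `f : ℕ → ℕ` represents a partition (Young diagram). -/
def IsPartition (f : ℕ → ℕ) : Prop :=
  Antitone f ∧ ∃ N, ∀ i, N ≤ i → f i = 0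

/-- The size of a partition: the sum of its parts. -/
noncomputable def size (f : ℕ → ℕ) : ℕ := ∑' i, f i

/-- The sum of the `k` largest parts of a partition. -/
def psum (f : ℕ → ℕ) (k : ℕ) : ℕ := ∑ i ∈ Finset.range k, f i

/-- The multiplicity with which `p` occurs as a part. -/
noncomputable def mult (f : ℕ → ℕ) (p : ℕ) : ℕ := {i | f i = p}.ncard

/-- The transpose (conjugate) partition: `transpose f i` is the length of the
`(i+1)`-st column of `f`. -/
noncomputable def transpose (f : ℕ → ℕ) : ℕ → ℕ := fun i => {j | i < f j}.ncard

/-- The number of parts of a partition (the length of its first column). -/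
noncomputable def numParts (f : ℕ → ℕ) : ℕ := {j | 0 < f j}.ncard

/-- Type B: odd size, and every (positive) even part occurs with even multiplicity. -/
def IsTypeB (f : ℕ → ℕ) : Prop :=
  IsPartition f ∧ Odd (size f) ∧ ∀ p, 0 < p → Even p → Even (mult f p)

/-- Type C: even size, and every odd part occurs with even multiplicity. -/
def IsTypeC (f : ℕ → ℕ) : Prop :=
  IsPartition f ∧ Even (size f) ∧ ∀ p, Odd p → Even (mult f p)

/-- Type D: even size, and every (positive) even part occurs with even multiplicity. -/
def IsTypeD (f : ℕ → ℕ) : Prop :=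
  IsPartition f ∧ Even (size f) ∧ ∀ p, 0 < p → Even p → Even (mult f p)

/-- Dominance order `f ≼ g` between partitions of the same size. -/
def Dom (f g : ℕ → ℕ) : Prop :=
  size f = size g ∧ ∀ k, psum f k ≤ psum g k

/-- `c` is the X-collapse of `d`, where predicate `T` expresses "type X": `c` is
the greatest type-X partition of the same size dominated by `d`. -/
def IsCollapse (T : (ℕ → ℕ) → Prop) (d c : ℕ → ℕ) : Prop :=
  T c ∧ Dom c d ∧ ∀ e, T e → Dom e d → Dom e c

open Classical in
/-- The X-collapse of `d` (junk value if it does not exist). -/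
noncomputable def collapse (T : (ℕ → ℕ) → Prop) (d : ℕ → ℕ) : ℕ → ℕ :=
  if h : ∃ c, IsCollapse T d c then h.choose else fun _ => 0

/-- The B-collapse. -/
noncomputable def collapseB : (ℕ → ℕ) → ℕ → ℕ := collapse IsTypeB

/-- The C-collapse. -/
noncomputable def collapseC : (ℕ → ℕ) → ℕ → ℕ := collapse IsTypeC

/-- The D-collapse. -/
noncomputable def collapseD : (ℕ → ℕ) → ℕ → ℕ := collapse IsTypeD

/-- `d⁺`: add one box to the first row. -/
def boxPlus (f : ℕ → ℕ) : ℕ → ℕ := fun i => if i = 0 then f 0 + 1 else f i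

/-- `d⁻`: remove one box from the last row (for nonempty `d`). -/
noncomputable def boxMinus (f : ℕ → ℕ) : ℕ → ℕ :=
  fun i => if i = numParts f - 1 then f i - 1 else f i

/-- `∇(d)`: remove the first column (every part decreased by 1). -/
def delCol (f : ℕ → ℕ) : ℕ → ℕ := fun i => f i - 1

/-- `∇̌(d)`: remove the first row (delete one largest part). -/
def delRow (f : ℕ → ℕ) : ℕ → ℕ := fun i => f (i + 1)

/-- The metaplectic Lusztig–Spaltenstein map: the D-collapse of the transpose. -/
noncomputable def mLS (d : ℕ → ℕ) : ℕ → ℕ := collapseD (transpose d)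

/-- The map `d̃_SP`: the C-collapse of `(e⁺)⁻`. -/
noncomputable def mSP (e : ℕ → ℕ) : ℕ → ℕ := collapseC (boxMinus (boxPlus e))

/-- The metaplectic Barbasch–Vogan duality. -/
noncomputable def mBV (d : ℕ → ℕ) : ℕ → ℕ := mSP (mLS d)
namespace Stmt5

lemma psum_succ (f : ℕ → ℕ) (k : ℕ) : psum f (k + 1) = psum f k + f k :=
  Finset.sum_range_succ f k

lemma psum_mono (f : ℕ → ℕ) : Monotone (psum f) := fun _ _ h =>
  Finset.sum_le_sum_of_subset (Finset.range_subset_range.mpr h)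

lemma size_eq_psum {f : ℕ → ℕ} {N : ℕ} (hN : ∀ i, N ≤ i → f i = 0) :
    size f = psum f N := by
  unfold size psum
  exact tsum_eq_sum (fun b hb => hN b (by simpa using hb))

lemma psum_le_size {f : ℕ → ℕ} (hf : IsPartition f) (k : ℕ) : psum f k ≤ size f := by
  obtain ⟨N, hN⟩ := hf.2
  have h : size f = psum f (max N k) := size_eq_psum (fun i hi => hN i (le_trans (le_max_left _ _) hi))
  rw [h]; exact psum_mono f (le_max_right _ _)

lemma dom_refl (f : ℕ → ℕ) : Dom f f := ⟨rfl, fun _ => le_rfl⟩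

lemma dom_trans {a b c : ℕ → ℕ} (h1 : Dom a b) (h2 : Dom b c) : Dom a c :=
  ⟨h1.1.trans h2.1, fun k => (h1.2 k).trans (h2.2 k)⟩

/-- `bd f v` : the number of parts of `f` that are `> v` (for a partition). -/
noncomputable def bd (f : ℕ → ℕ) (v : ℕ) : ℕ := sInf {i | f i ≤ v}

lemma bd_nonempty {f : ℕ → ℕ} (hf : IsPartition f) (v : ℕ) : {i | f i ≤ v}.Nonempty := by
  obtain ⟨N, hN⟩ := hf.2
  exact ⟨N, by simp [hN N le_rfl]⟩

lemma bd_spec {f : ℕ → ℕ} (hf : IsPartition f) (v : ℕ) : f (bd f v) ≤ v :=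
  Nat.sInf_mem (bd_nonempty hf v)

lemma bd_le {f : ℕ → ℕ} {v i : ℕ} (h : f i ≤ v) : bd f v ≤ i := Nat.sInf_le h

lemma lt_of_lt_bd {f : ℕ → ℕ} {v i : ℕ} (h : i < bd f v) : v < f i := by
  by_contra hc
  exact absurd (bd_le (by omega : f i ≤ v)) (by omega)

lemma le_of_bd_le {f : ℕ → ℕ} (hf : IsPartition f) {v i : ℕ} (h : bd f v ≤ i) : f i ≤ v :=
  le_trans (hf.1 h) (bd_spec hf v)

lemma bd_mono {f : ℕ → ℕ} (hf : IsPartition f) {v w : ℕ} (h : v ≤ w) : bd f w ≤ bd f v :=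
  bd_le (le_trans (bd_spec hf v) h)

lemma psum_Ico_const {f : ℕ → ℕ} {a b p : ℕ} (hab : a ≤ b)
    (h : ∀ i, a ≤ i → i < b → f i = p) : psum f b = psum f a + (b - a) * p := by
  unfold psum
  rw [Finset.range_eq_Ico,
    ← Finset.sum_Ico_consecutive _ (Nat.zero_le a) hab]
  have key : ∑ i ∈ Finset.Ico a b, f i = (b - a) * p := by
    have hc : ∀ i ∈ Finset.Ico a b, f i = p := fun i hi =>
      h i (Finset.mem_Ico.mp hi).1 (Finset.mem_Ico.mp hi).2
    rw [Finset.sum_congr rfl hc, Finset.sum_const, Nat.card_Ico, smul_eq_mul]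
  rw [key, Finset.range_eq_Ico]

lemma mult_eq {f : ℕ → ℕ} (hf : IsPartition f) {p : ℕ} (hp : 1 ≤ p) :
    mult f p = bd f (p - 1) - bd f p := by
  unfold mult
  have hset : {i | f i = p} = Set.Ico (bd f p) (bd f (p - 1)) := by
    ext i
    simp only [Set.mem_setOf_eq, Set.mem_Ico]
    constructor
    · intro h
      constructor
      · exact bd_le (le_of_eq h)
      · by_contra hc
        have := le_of_bd_le hf (by omega : bd f (p-1) ≤ i)
        omega
    · rintro ⟨h1, h2⟩
      have h3 := le_of_bd_le hf h1
      have h4 := lt_of_lt_bd h2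
      omega
  rw [hset, ← Finset.coe_Ico, Set.ncard_coe_finset, Nat.card_Ico]

lemma numParts_eq_bd {f : ℕ → ℕ} (hf : IsPartition f) : numParts f = bd f 0 := by
  unfold numParts
  have hset : {j | 0 < f j} = Set.Iio (bd f 0) := by
    ext j
    simp only [Set.mem_setOf_eq, Set.mem_Iio]
    constructor
    · intro h
      by_contra hc
      have := le_of_bd_le hf (by omega : bd f 0 ≤ j)
      omega
    · intro h
      exact lt_of_lt_bd h
  rw [hset, ← Finset.coe_range, Set.ncard_coe_finset, Finset.card_range]

lemma bd_le_size {f : ℕ → ℕ} (hf : IsPartition f) : bd f 0 ≤ size f := by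
  have h1 : size f = psum f (bd f 0) :=
    size_eq_psum (fun i hi => Nat.le_zero.mp (le_of_bd_le hf hi))
  rw [h1]
  calc bd f 0 = ∑ _i ∈ Finset.range (bd f 0), 1 := by simp
  _ ≤ psum f (bd f 0) := Finset.sum_le_sum (fun i hi => lt_of_lt_bd (Finset.mem_range.mp hi))

end Stmt5
namespace Stmt5

lemma even_psum_bd {f : ℕ → ℕ} (hf : IsPartition f) (v : ℕ)
    (H : ∀ q, v < q → Odd q → Even (mult f q)) : Even (psum f (bd f v)) := by
  suffices aux : ∀ k v, f 0 ≤ v + k → (∀ q, v < q → Odd q → Even (mult f q)) →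
      Even (psum f (bd f v)) from aux (f 0) v (by omega) H
  intro k
  induction k with
  | zero =>
    intro v h0 _
    have hb : bd f v = 0 := Nat.le_zero.mp (bd_le (by omega : f 0 ≤ v))
    rw [hb]
    simp [psum]
  | succ k ih =>
    intro v h0 Hv
    have hmono : bd f (v + 1) ≤ bd f v := bd_mono hf (by omega)
    have h1 : psum f (bd f v) = psum f (bd f (v + 1)) + (bd f v - bd f (v + 1)) * (v + 1) := by
      apply psum_Ico_const hmono
      intro i hi1 hi2
      have h3 := le_of_bd_le hf hi1
      have h4 := lt_of_lt_bd hi2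
      omega
    rw [h1]
    refine Even.add (ih (v + 1) (by omega) (fun q hq => Hv q (by omega))) ?_
    rcases Nat.even_or_odd (v + 1) with hev | hod
    · exact hev.mul_left _
    · have hm : mult f (v + 1) = bd f v - bd f (v + 1) := by
        have := mult_eq hf (p := v + 1) (by omega)
        simpa using this
      have := Hv (v + 1) (by omega) hod
      rw [hm] at this
      exact this.mul_right _

lemma parity_lemma {f : ℕ → ℕ} (hf : IsPartition f)
    (hC : ∀ q, Odd q → Even (mult f q)) {k : ℕ} (hodd : Odd (psum f (k + 1))) :
    f k = f (k + 1) ∧ Odd (f (k + 1)) := by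
  have hC' : ∀ v, Even (psum f (bd f v)) := fun v =>
    even_psum_bd hf v (fun q _ hq => hC q hq)
  set p := f k with hp
  have hppos : 1 ≤ p := by
    by_contra hc
    -- p = 0 : psum f (k+1) = psum f (bd f 0), even
    have hb : bd f 0 ≤ k := bd_le (by omega)
    have h1 : psum f (k + 1) = psum f (bd f 0) + (k + 1 - bd f 0) * 0 := by
      apply psum_Ico_const (by omega)
      intro i hi1 _
      have := le_of_bd_le hf hi1
      omega
    rw [h1] at hodd
    simp at h1 ⊢
    have := hC' 0
    rw [Nat.not_even_iff_odd.symm] at hodd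
    exact hodd (by simpa using this)
  have ha : bd f p ≤ k := bd_le (le_of_eq hp.symm)
  have h1 : psum f (k + 1) = psum f (bd f p) + (k + 1 - bd f p) * p := by
    apply psum_Ico_const (by omega)
    intro i hi1 hi2
    have h3 := le_of_bd_le hf hi1
    have h4 : f i ≥ f k := hf.1 (by omega)
    omega
  have hoddprod : Odd ((k + 1 - bd f p) * p) := by
    rcases Nat.even_or_odd ((k + 1 - bd f p) * p) with hev | hod
    · rw [h1] at hodd
      rw [Nat.not_even_iff_odd.symm] at hodd
      exact absurd ((hC' p).add hev) hodd
    · exact hod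
  have hpodd : Odd p := by
    rcases Nat.even_or_odd p with hev | hod
    · exact absurd (hev.mul_left _) (by rw [← Nat.not_even_iff_odd.symm]; exact hoddprod)
    · exact hod
  have hcntodd : Odd (k + 1 - bd f p) := by
    rcases Nat.even_or_odd (k + 1 - bd f p) with hev | hod
    · exact absurd (hev.mul_right _) (by rw [← Nat.not_even_iff_odd.symm]; exact hoddprod)
    · exact hod
  have hmult : mult f p = bd f (p - 1) - bd f p := mult_eq hf hppos
  have hmev : Even (bd f (p - 1) - bd f p) := by rw [← hmult]; exact hC p hpodd
  have hkb : k < bd f (p - 1) := by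
    by_contra hc
    have := le_of_bd_le hf (by omega : bd f (p - 1) ≤ k)
    omega
  have hk1b : k + 1 < bd f (p - 1) := by
    rcases Nat.lt_or_ge (k + 1) (bd f (p - 1)) with h | h
    · exact h
    · -- k + 1 = bd f (p-1), contradiction with parities
      have : k + 1 = bd f (p - 1) := by omega
      rw [Nat.even_sub (by omega)] at hmev
      rw [Nat.odd_iff, Nat.even_iff, Nat.even_iff] at *
      omega
  have h5 := lt_of_lt_bd hk1b
  have h6 : f (k + 1) ≤ f k := hf.1 (by omega)
  constructor
  · omega
  · have : f (k + 1) = p := by omega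
    rw [this]; exact hpodd

lemma key_claim {d e : ℕ → ℕ} (hd : IsPartition d) (he : IsTypeC e) (hdom : Dom e d)
    {k : ℕ} (hodd : Odd (psum d (k + 1)))
    (hcond : ¬(d k = d (k + 1) ∧ Odd (d (k + 1)))) :
    psum e (k + 1) < psum d (k + 1) := by
  rcases Nat.lt_or_ge (psum e (k + 1)) (psum d (k + 1)) with h | h
  · exact h
  have heq : psum e (k + 1) = psum d (k + 1) := le_antisymm (hdom.2 _) h
  have hpar := parity_lemma he.1 he.2.2 (k := k) (heq ▸ hodd)
  set p := e (k + 1) with hp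
  have h1 : psum e k + e k = psum d k + d k := by
    rw [← psum_succ, ← psum_succ, heq]
  have h2 : psum e k ≤ psum d k := hdom.2 k
  have h3 : d k ≤ e k := by omega
  have h4 : psum e (k + 2) = psum d (k + 1) + p := by
    rw [psum_succ, heq, hp]
  have h5 : psum e (k + 2) ≤ psum d (k + 2) := hdom.2 _
  have h6 : psum d (k + 2) = psum d (k + 1) + d (k + 1) := psum_succ d (k + 1)
  have h7 : p ≤ d (k + 1) := by omega
  have h8 : d (k + 1) ≤ d k := hd.1 (by omega)
  have h9 : e k = p := hpar.1
  have h10 : d (k + 1) = p := by omega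
  exact absurd ⟨by omega, by rw [h10]; exact hpar.2⟩ hcond

end Stmt5
namespace Stmt5

lemma exists_collapseC : ∀ (d : ℕ → ℕ), IsPartition d → Even (size d) →
    ∃ c, IsCollapse IsTypeC d c := by
  suffices key : ∀ t (d : ℕ → ℕ), IsPartition d → Even (size d) →
      (∑ k ∈ Finset.range (size d + 1), psum d k) = t → ∃ c, IsCollapse IsTypeC d c by
    exact fun d hd hev => key _ d hd hev rfl
  intro t
  induction t using Nat.strong_induction_on with
  | _ t ih =>
  intro d hd hev hvt
  by_cases hC : IsTypeC d
  · exact ⟨d, hC, dom_refl d, fun e _ h => h⟩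
  -- find a bad odd part
  have hbad : ∃ p, Odd p ∧ Odd (mult d p) := by
    unfold IsTypeC at hC
    push_neg at hC
    obtain ⟨p, hp1, hp2⟩ := hC hd hev
    exact ⟨p, hp1, Nat.not_even_iff_odd.mp hp2⟩
  obtain ⟨p0, hp01, hp02⟩ := hbad
  have hbound : ∀ q, d 0 < q → Even (mult d q) := by
    intro q hq
    have hempty : {i | d i = q} = ∅ := by
      ext i
      simp only [Set.mem_setOf_eq, Set.mem_empty_iff_false, iff_false]
      intro hcq
      have : d i ≤ d 0 := hd.1 (Nat.zero_le i)
      omega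
    unfold mult; rw [hempty]; simp
  classical
  set P : ℕ → Prop := fun q => Odd q ∧ Odd (mult d q) with hPdef
  have hp0le : p0 ≤ d 0 := by
    by_contra hc
    exact (Nat.not_odd_iff_even.symm.mp (hbound p0 (by omega))) hp02
  set p := Nat.findGreatest P (d 0) with hpdef
  have hPp : P p := Nat.findGreatest_spec hp0le ⟨hp01, hp02⟩
  have hp1 : Odd p := hPp.1
  have hpm : Odd (mult d p) := hPp.2
  have hmax : ∀ q, p < q → Odd q → Even (mult d q) := by
    intro q hq hodd
    rcases Nat.lt_or_ge (d 0) q with h | h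
    · exact hbound q h
    · by_contra hcon
      exact Nat.findGreatest_is_greatest hq h ⟨hodd, Nat.not_even_iff_odd.mp hcon⟩
  have hEv : Even (psum d (bd d p)) := even_psum_bd hd p hmax
  have hp3 : 3 ≤ p := by
    by_contra hc
    have hp1' : p = 1 := by rcases hp1 with ⟨r, hr⟩; omega
    have hb01 : bd d 1 ≤ bd d 0 := bd_mono hd (by omega)
    have hsum : psum d (bd d 0) = psum d (bd d 1) + (bd d 0 - bd d 1) * 1 :=
      psum_Ico_const hb01 (fun i h1 h2 => by
        have := le_of_bd_le hd h1
        have := lt_of_lt_bd h2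
        omega)
    have hEv1 : Even (psum d (bd d 1)) := by rw [hp1'] at hEv; exact hEv
    have hmm : mult d 1 = bd d 0 - bd d 1 := by simpa using mult_eq hd (p := 1) le_rfl
    have hoddm1 : Odd (bd d 0 - bd d 1) := by rw [← hmm, ← hp1']; exact hpm
    have hszeq : size d = psum d (bd d 0) :=
      size_eq_psum (fun i hi => Nat.le_zero.mp (le_of_bd_le hd hi))
    rw [hszeq, hsum] at hev
    have h1 := Nat.even_iff.mp hEv1
    have h2 := Nat.odd_iff.mp hoddm1
    have h3 := Nat.even_iff.mp hev
    omega
  set a := bd d p with ha_def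
  set m := bd d (p - 1) with hm_def
  set j := bd d (p - 2) with hj_def
  have hmulteq : mult d p = m - a := mult_eq hd (by omega)
  have ham : a < m := by
    have := Nat.odd_iff.mp (hmulteq ▸ hpm)
    omega
  have hmj : m ≤ j := bd_mono hd (by omega)
  have hm1 : 1 ≤ m := by omega
  have hdm1 : d (m - 1) = p := by
    have h1 : d (m - 1) ≤ p := le_of_bd_le hd (by omega)
    have h2 : p - 1 < d (m - 1) := lt_of_lt_bd (by omega)
    omega
  have hdmid : ∀ i, m ≤ i → i < j → d i = p - 1 := by
    intro i h1 h2
    have h3 : d i ≤ p - 1 := le_of_bd_le hd h1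
    have h4 : p - 2 < d i := lt_of_lt_bd h2
    omega
  have hdj : d j ≤ p - 2 := bd_spec hd _
  have hoddm : Odd (psum d m) := by
    have hsum : psum d m = psum d a + (m - a) * p :=
      psum_Ico_const (le_of_lt ham) (fun i h1 h2 => by
        have h3 := le_of_bd_le hd h1
        have h4 := lt_of_lt_bd h2
        omega)
    rw [hsum]
    exact hEv.add_odd (Odd.mul (hmulteq ▸ hpm) hp1)
  have hoddk : ∀ k, m ≤ k → k ≤ j → Odd (psum d k) := by
    intro k h1 h2
    have hsum : psum d k = psum d m + (k - m) * (p - 1) :=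
      psum_Ico_const h1 (fun i hi1 hi2 => hdmid i hi1 (by omega))
    rw [hsum]
    have hevp : Even (p - 1) := by
      rcases hp1 with ⟨r, hr⟩; exact ⟨r, by omega⟩
    exact hoddm.add_even (hevp.mul_left _)
  -- the modified partition
  set d' : ℕ → ℕ := fun i => if i = m - 1 then p - 1 else if i = j then d j + 1 else d i
    with hd'def
  have hd'm1 : d' (m - 1) = p - 1 := by simp only [hd'def, if_pos rfl]
  have hd'j : d' j = d j + 1 := by
    simp only [hd'def]
    rw [if_neg (by omega)]
    simp
  have hd'other : ∀ i, i ≠ m - 1 → i ≠ j → d' i = d i := by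
    intro i h1 h2
    simp only [hd'def]
    rw [if_neg h1, if_neg h2]
  have hmaster : ∀ k, (k < m ∨ j < k → psum d' k = psum d k) ∧
      (m ≤ k → k ≤ j → psum d' k + 1 = psum d k) := by
    intro k
    induction k with
    | zero => exact ⟨fun _ => by simp [psum], fun h1 _ => absurd h1 (by omega)⟩
    | succ k ihk =>
      have hstep := psum_succ d' k
      have hstep2 := psum_succ d k
      constructor
      · intro hk
        rcases hk with hk | hk
        · have h1 := ihk.1 (Or.inl (by omega))
          have h2 := hd'other k (by omega) (by omega)
          omega
        · rcases Nat.eq_or_lt_of_le (show j ≤ k by omega) with hkj | hkj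
          · have h1 := ihk.2 (by omega) (by omega)
            have e1 : d' k = d k + 1 := by rw [← hkj]; exact hd'j
            omega
          · have h1 := ihk.1 (Or.inr hkj)
            have h2 := hd'other k (by omega) (by omega)
            omega
      · intro h1 h2
        rcases Nat.eq_or_lt_of_le h1 with hk | hk
        · have e0 : k = m - 1 := by omega
          have e1 : d' k = p - 1 := by rw [e0]; exact hd'm1
          have e2 : d k = p := by rw [e0]; exact hdm1
          have h3 := ihk.1 (Or.inl (by omega))
          omega
        · have h3 := ihk.2 (by omega) (by omega)
          have e1 : d' k = d k := hd'other k (by omega) (by omega)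
          omega
  have hd'part : IsPartition d' := by
    constructor
    · apply antitone_nat_of_succ_le
      intro i
      by_cases c1 : i + 1 < m - 1
      · rw [hd'other i (by omega) (by omega), hd'other (i + 1) (by omega) (by omega)]
        exact hd.1 (by omega)
      by_cases c2 : i + 1 = m - 1
      · rw [hd'other i (by omega) (by omega), c2, hd'm1]
        have h1 : d (m - 1) ≤ d i := hd.1 (by omega)
        omega
      by_cases c3 : i = m - 1
      · have him : i + 1 = m := by omega
        rw [him, c3, hd'm1]
        by_cases c4 : m = j
        · rw [c4, hd'j]; omega
        · rw [hd'other m (by omega) c4, hdmid m le_rfl (by omega)]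
      by_cases c5 : i = j
      · rw [c5, hd'j, hd'other (j + 1) (by omega) (by omega)]
        have : d (j + 1) ≤ d j := hd.1 (by omega)
        omega
      by_cases c6 : i + 1 = j
      · rw [hd'other i (by omega) (by omega), c6, hd'j, hdmid i (by omega) (by omega)]
        omega
      by_cases c7 : i < j
      · rw [hd'other i (by omega) (by omega), hd'other (i + 1) (by omega) (by omega)]
        exact hd.1 (by omega)
      · rw [hd'other i (by omega) (by omega), hd'other (i + 1) (by omega) (by omega)]
        exact hd.1 (by omega)
    · obtain ⟨N, hN⟩ := hd.2
      refine ⟨max N (j + 1), fun i hi => ?_⟩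
      rw [hd'other i (by omega) (by omega)]
      exact hN i (by omega)
  have hsz' : size d' = size d := by
    obtain ⟨N, hN⟩ := hd.2
    have h1 : size d' = psum d' (max N (j + 1)) :=
      size_eq_psum (fun i hi => by
        rw [hd'other i (by omega) (by omega)]; exact hN i (by omega))
    have h2 : size d = psum d (max N (j + 1)) := size_eq_psum (fun i hi => hN i (by omega))
    rw [h1, h2]
    exact (hmaster _).1 (Or.inr (by omega))
  have hm_le : m ≤ size d := le_trans (bd_mono hd (Nat.zero_le _)) (bd_le_size hd)
  have hvlt : (∑ k ∈ Finset.range (size d' + 1), psum d' k) < t := by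
    rw [hsz', ← hvt]
    apply Finset.sum_lt_sum
    · intro k _
      by_cases hkm : m ≤ k ∧ k ≤ j
      · have := (hmaster k).2 hkm.1 hkm.2; omega
      · have := (hmaster k).1 (by omega); omega
    · refine ⟨m, Finset.mem_range.mpr (by omega), ?_⟩
      have := (hmaster m).2 le_rfl hmj
      omega
  obtain ⟨c, hc⟩ := ih _ hvlt d' hd'part (by rw [hsz']; exact hev) rfl
  have hdomd'd : Dom d' d := by
    refine ⟨hsz', fun k => ?_⟩
    by_cases hkm : m ≤ k ∧ k ≤ j
    · have := (hmaster k).2 hkm.1 hkm.2; omega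
    · have := (hmaster k).1 (by omega); omega
  refine ⟨c, hc.1, dom_trans hc.2.1 hdomd'd, ?_⟩
  intro e he hdome
  apply hc.2.2 e he
  refine ⟨hdome.1.trans hsz'.symm, fun k => ?_⟩
  by_cases hkm : m ≤ k ∧ k ≤ j
  · obtain ⟨k', rfl⟩ : ∃ k', k = k' + 1 := ⟨k - 1, by omega⟩
    have hcnd : ¬(d k' = d (k' + 1) ∧ Odd (d (k' + 1))) := by
      rintro ⟨hq1, hq2⟩
      rcases Nat.lt_or_ge (k' + 1) j with hlt | hge
      · have hval := hdmid (k' + 1) hkm.1 hlt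
        have hevp : Even (p - 1) := by
          rcases hp1 with ⟨r, hr⟩; exact ⟨r, by omega⟩
        rw [hval] at hq2
        have h1 := Nat.even_iff.mp hevp
        have h2 := Nat.odd_iff.mp hq2
        omega
      · have hkj : k' + 1 = j := by omega
        have hv2 : d (k' + 1) ≤ p - 2 := by rw [hkj]; exact hdj
        rcases Nat.eq_or_lt_of_le hmj with hmeq | hmlt
        · have hv1 : d k' = p := by rw [show k' = m - 1 by omega]; exact hdm1
          omega
        · have hv1 : d k' = p - 1 := hdmid k' (by omega) (by omega)
          omega
    have hstrict := key_claim hd he hdome (hoddk (k' + 1) hkm.1 hkm.2) hcnd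
    have := (hmaster (k' + 1)).2 hkm.1 hkm.2
    omega
  · have h1 := (hmaster k).1 (by omega)
    have h2 := hdome.2 k
    omega

end Stmt5
namespace Stmt5

lemma collapse_spec {T : (ℕ → ℕ) → Prop} {d : ℕ → ℕ} (h : ∃ c, IsCollapse T d c) :
    IsCollapse T d (collapse T d) := by
  unfold collapse
  rw [dif_pos h]
  exact h.choose_spec

lemma psum_boxPlus (e : ℕ → ℕ) (k : ℕ) :
    psum (boxPlus e) k = psum e k + (if k = 0 then 0 else 1) := by
  induction k with
  | zero => simp [psum]
  | succ k ih =>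
    rw [psum_succ, psum_succ, ih]
    by_cases hk : k = 0
    · subst hk; simp [boxPlus, psum]
    · have hbp : boxPlus e k = e k := by simp [boxPlus, hk]
      rw [hbp]
      simp [hk]
      omega

lemma boxPlus_partition {e : ℕ → ℕ} (he : IsPartition e) : IsPartition (boxPlus e) := by
  constructor
  · apply antitone_nat_of_succ_le
    intro i
    by_cases hi : i = 0
    · subst hi
      have h1 : e 1 ≤ e 0 := he.1 (by omega)
      simp [boxPlus]
      omega
    · have h1 : e (i + 1) ≤ e i := he.1 (by omega)
      simpa [boxPlus, hi] using h1
  · obtain ⟨N, hN⟩ := he.2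
    refine ⟨max N 1, fun i hi => ?_⟩
    have : boxPlus e i = e i := by simp [boxPlus, show i ≠ 0 by omega]
    rw [this]
    exact hN i (by omega)

lemma size_boxPlus {e : ℕ → ℕ} (he : IsPartition e) : size (boxPlus e) = size e + 1 := by
  obtain ⟨N, hN⟩ := he.2
  have h1 : size (boxPlus e) = psum (boxPlus e) (max N 1) :=
    size_eq_psum (fun i hi => by
      have : boxPlus e i = e i := by simp [boxPlus, show i ≠ 0 by omega]
      rw [this]; exact hN i (by omega))
  have h2 : size e = psum e (max N 1) := size_eq_psum (fun i hi => hN i (by omega))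
  rw [h1, h2, psum_boxPlus]
  simp [show ¬(max N 1 = 0) by omega]

lemma bm_facts {e : ℕ → ℕ} (he : IsPartition e) : ∃ m : ℕ,
    IsPartition (boxMinus (boxPlus e)) ∧ size (boxMinus (boxPlus e)) = size e ∧
    (∀ k, 0 < k → k < m →
      psum (boxMinus (boxPlus e)) k = psum e k + 1 ∧ psum e k + 1 ≤ size e) ∧
    (∀ k, m ≤ k → psum (boxMinus (boxPlus e)) k = psum e k ∧ psum e k = size e) := by
  set g := boxPlus e with hg_def
  have hg : IsPartition g := boxPlus_partition he
  set m := bd g 0 with hm_def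
  refine ⟨m, ?_⟩
  have hnum : numParts g = m := numParts_eq_bd hg
  set f := boxMinus g with hf_def
  have hf_eq : ∀ i, f i = if i = m - 1 then g i - 1 else g i := by
    intro i
    simp only [hf_def, boxMinus, hnum]
  have hm1 : 1 ≤ m := by
    by_contra hc
    have h1 : g 0 ≤ 0 := le_of_bd_le hg (by omega)
    have h2 : g 0 = e 0 + 1 := by simp [hg_def, boxPlus]
    omega
  have hgm1 : 1 ≤ g (m - 1) := lt_of_lt_bd (by omega)
  have hgzero : ∀ i, m ≤ i → g i = 0 := fun i hi => Nat.le_zero.mp (le_of_bd_le hg hi)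
  have hfo : ∀ i, i ≠ m - 1 → f i = g i := fun i hi => by rw [hf_eq i, if_neg hi]
  have hpm : ∀ k, (k < m → psum f k = psum g k) ∧ (m ≤ k → psum f k + 1 = psum g k) := by
    intro k
    induction k with
    | zero => exact ⟨fun _ => by simp [psum], fun h => absurd h (by omega)⟩
    | succ k ihk =>
      have hs1 := psum_succ f k
      have hs2 := psum_succ g k
      constructor
      · intro hk
        have h1 := ihk.1 (by omega)
        have h2 := hfo k (by omega)
        omega
      · intro hk
        rcases Nat.eq_or_lt_of_le hk with hk' | hk'
        · have h1 := ihk.1 (by omega)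
          have h2 : f k = g k - 1 := by rw [hf_eq k, if_pos (by omega)]
          have h3 : g k = g (m - 1) := by rw [show k = m - 1 by omega]
          omega
        · have h1 := ihk.2 (by omega)
          have h2 := hfo k (by omega)
          omega
  have hfpart : IsPartition f := by
    constructor
    · apply antitone_nat_of_succ_le
      intro i
      by_cases c1 : i + 1 = m - 1
      · rw [hfo i (by omega), hf_eq (i + 1), if_pos c1]
        have : g (i + 1) ≤ g i := hg.1 (by omega)
        omega
      by_cases c2 : i = m - 1
      · rw [hf_eq i, if_pos c2, hfo (i + 1) (by omega)]
        have : g (i + 1) = 0 := hgzero (i + 1) (by omega)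
        omega
      · rw [hfo i c2, hfo (i + 1) c1]
        exact hg.1 (by omega)
    · obtain ⟨N, hN⟩ := hg.2
      refine ⟨max N m, fun i hi => ?_⟩
      rw [hfo i (by omega)]
      exact hN i (by omega)
  have hsg : size g = size e + 1 := size_boxPlus he
  obtain ⟨N, hN⟩ := hg.2
  have hsf : size f = size e := by
    have h1 : size f = psum f (max N m) :=
      size_eq_psum (fun i hi => by rw [hfo i (by omega)]; exact hN i (by omega))
    have h2 : size g = psum g (max N m) := size_eq_psum (fun i hi => hN i (by omega))
    have h3 := (hpm (max N m)).2 (by omega)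
    omega
  refine ⟨hfpart, hsf, ?_, ?_⟩
  · intro k hk0 hkm
    have h1 := (hpm k).1 hkm
    have h2 := psum_boxPlus e k
    have h3 : 1 ≤ e k := by
      have h4 : 0 < g k := lt_of_lt_bd (by omega)
      have h5 : g k = e k := by simp [hg_def, boxPlus, show k ≠ 0 by omega]
      omega
    have h6 : psum e (k + 1) ≤ size e := psum_le_size he (k + 1)
    have h7 := psum_succ e k
    constructor
    · rw [h1, h2, if_neg (by omega)]
    · omega
  · intro k hk
    have h1 := (hpm k).2 hk
    have h2 := psum_boxPlus e k
    rw [← hg_def] at h2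
    have h3 : psum e k = size e := by
      refine (size_eq_psum (fun i hi => ?_)).symm
      have h4 : g i = 0 := hgzero i (by omega)
      have h5 : g i = e i := by simp [hg_def, boxPlus, show i ≠ 0 by omega]
      omega
    rw [if_neg (by omega)] at h2
    exact ⟨by omega, h3⟩

end Stmt5
/-- the map `d̃_SP` from special type-D partitions of size `2n` to
metaplectic special partitions of size `2n` is order preserving for the
dominance order. -/
theorem stmt_5 (n : ℕ) (e e' : ℕ → ℕ)
    (he : IsTypeD e) (hesp : IsTypeC (transpose e)) (hsize : size e = 2 * n)
    (he' : IsTypeD e') (hesp' : IsTypeC (transpose e')) (hsize' : size e' = 2 * n)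
    (hdom : Dom e e') :
    Dom (mSP e) (mSP e') := by
  have hpe : IsPartition e := he.1
  have hpe' : IsPartition e' := he'.1
  obtain ⟨m, hfp, hfs, hlt, hge⟩ := Stmt5.bm_facts hpe
  obtain ⟨m', hfp', hfs', hlt', hge'⟩ := Stmt5.bm_facts hpe'
  have hDomff' : Dom (boxMinus (boxPlus e)) (boxMinus (boxPlus e')) := by
    refine ⟨by rw [hfs, hfs', hsize, hsize'], fun k => ?_⟩
    by_cases hk0 : k = 0
    · subst hk0; simp [psum]
    have hd2 := hdom.2 k
    have hsz : size e = size e' := by rw [hsize, hsize']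
    by_cases hkm : k < m
    · by_cases hkm' : k < m'
      · have a1 := hlt k (by omega) hkm
        have a2 := hlt' k (by omega) hkm'
        omega
      · have a1 := hlt k (by omega) hkm
        have a2 := hge' k (by omega)
        omega
    · by_cases hkm' : k < m'
      · have a1 := hge k (by omega)
        have a2 := hlt' k (by omega) hkm'
        omega
      · have a1 := hge k (by omega)
        have a2 := hge' k (by omega)
        omega
  have hex : ∃ c, IsCollapse IsTypeC (boxMinus (boxPlus e)) c :=
    Stmt5.exists_collapseC _ hfp (by rw [hfs, hsize]; exact ⟨n, two_mul n⟩)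
  have hex' : ∃ c, IsCollapse IsTypeC (boxMinus (boxPlus e')) c :=
    Stmt5.exists_collapseC _ hfp' (by rw [hfs', hsize']; exact ⟨n, two_mul n⟩)
  have hcf := Stmt5.collapse_spec hex
  have hcf' := Stmt5.collapse_spec hex'
  show Dom (collapse IsTypeC (boxMinus (boxPlus e))) (collapse IsTypeC (boxMinus (boxPlus e')))
  exact hcf'.2.2 _ hcf.1 (Stmt5.dom_trans hcf.2.1 hDomff')
end

section
/- Let a ≥ n ≥ 0 be integers and let d be a type-C partition of size 2n+2a whose largest part r1(d) equals 2a. Then: (i) ∇̌(d) is a type-C partition of size 2n; (ii) the C-collapse of d^t has exactly 2a parts; and (iii) ∇(C-collapse of d^t) equals the D-collapse of (∇̌(d))^t. -/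
/-! ### Basic lemmas about `psum` and `size` -/

lemma psum_succ (f : ℕ → ℕ) (k : ℕ) : psum f (k + 1) = psum f k + f k :=
  Finset.sum_range_succ f k

lemma psum_mono (f : ℕ → ℕ) {k l : ℕ} (h : k ≤ l) : psum f k ≤ psum f l := by
  unfold psum
  exact Finset.sum_le_sum_of_subset (Finset.range_subset_range.2 h)

lemma psum_add_interval (f : ℕ → ℕ) {k l : ℕ} (h : k ≤ l) :
    psum f l = psum f k + ∑ i ∈ Finset.Ico k l, f i := by
  unfold psum
  rw [Finset.range_eq_Ico, Finset.range_eq_Ico]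
  exact (Finset.sum_Ico_consecutive f (Nat.zero_le k) h).symm

lemma funext_of_psum_eq {f g : ℕ → ℕ} (h : ∀ k, psum f k = psum g k) : f = g := by
  funext k
  have h1 := h (k + 1)
  have h2 := h k
  rw [psum_succ, psum_succ] at h1
  omega

lemma size_eq_psum {f : ℕ → ℕ} {N : ℕ} (hN : ∀ i, N ≤ i → f i = 0) :
    size f = psum f N := by
  unfold size psum
  exact tsum_eq_sum (fun i hi => hN i (by simp at hi; omega))

lemma psum_stable {f : ℕ → ℕ} {N : ℕ} (hN : ∀ i, N ≤ i → f i = 0) {k : ℕ} (h : N ≤ k) :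
    psum f k = psum f N := by
  rw [psum_add_interval f h]
  have : ∑ i ∈ Finset.Ico N k, f i = 0 :=
    Finset.sum_eq_zero (fun i hi => hN i (Finset.mem_Ico.1 hi).1)
  omega

lemma psum_le_size {f : ℕ → ℕ} {N : ℕ} (hN : ∀ i, N ≤ i → f i = 0) (k : ℕ) :
    psum f k ≤ size f := by
  rw [size_eq_psum hN]
  rcases le_or_gt k N with h | h
  · exact psum_mono f h
  · rw [psum_stable hN h.le]

/-! ### Column lengths -/

/-- The number of rows of `f` of length at least `p`. -/
noncomputable def colLen (f : ℕ → ℕ) (p : ℕ) : ℕ := sInf {m | f m < p}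

lemma colLen_nonempty {f : ℕ → ℕ} {N : ℕ} (hN : ∀ i, N ≤ i → f i = 0) {p : ℕ} (hp : 1 ≤ p) :
    {m | f m < p}.Nonempty := ⟨N, by simp [hN N le_rfl]; omega⟩

lemma colLen_spec {f : ℕ → ℕ} {N : ℕ} (hN : ∀ i, N ≤ i → f i = 0) {p : ℕ} (hp : 1 ≤ p) :
    f (colLen f p) < p :=
  Nat.sInf_mem (colLen_nonempty hN hp)

lemma lt_colLen_iff {f : ℕ → ℕ} (hA : Antitone f) {N : ℕ} (hN : ∀ i, N ≤ i → f i = 0)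
    {p : ℕ} (hp : 1 ≤ p) {i : ℕ} : i < colLen f p ↔ p ≤ f i := by
  constructor
  · intro h
    have := Nat.notMem_of_lt_sInf (by exact h : i < sInf {m | f m < p})
    simpa using this
  · intro h
    by_contra hcon
    push_neg at hcon
    have := hA hcon
    have := colLen_spec hN hp (f := f)
    omega

lemma colLen_anti {f : ℕ → ℕ} {N : ℕ} (hN : ∀ i, N ≤ i → f i = 0)
    {p q : ℕ} (hp : 1 ≤ p) (h : p ≤ q) : colLen f q ≤ colLen f p := by
  have h1 : colLen f p ∈ {m | f m < p} := Nat.sInf_mem (colLen_nonempty hN hp)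
  exact Nat.sInf_le (by simp only [Set.mem_setOf_eq] at h1 ⊢; omega)

lemma colLen_le {f : ℕ → ℕ} {N : ℕ} (hN : ∀ i, N ≤ i → f i = 0) (p : ℕ) (hp : 1 ≤ p) :
    colLen f p ≤ N :=
  Nat.sInf_le (by simp [hN N le_rfl]; omega)

lemma colLen_eq_zero {f : ℕ → ℕ} {p : ℕ} (h : f 0 < p) : colLen f p = 0 :=
  Nat.sInf_eq_zero.2 (Or.inl h)

lemma transpose_eq_colLen {f : ℕ → ℕ} (hA : Antitone f) {N : ℕ} (hN : ∀ i, N ≤ i → f i = 0)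
    (i : ℕ) : transpose f i = colLen f (i + 1) := by
  unfold transpose
  have : {j | i < f j} = ↑(Finset.range (colLen f (i + 1))) := by
    ext j
    simp only [Set.mem_setOf_eq, Finset.coe_range, Set.mem_Iio]
    rw [lt_colLen_iff hA hN (by omega)]
    omega
  rw [this, Set.ncard_coe_finset, Finset.card_range]

lemma mult_eq_colLen {f : ℕ → ℕ} (hA : Antitone f) {N : ℕ} (hN : ∀ i, N ≤ i → f i = 0)
    {p : ℕ} (hp : 1 ≤ p) : mult f p = colLen f p - colLen f (p + 1) := by
  unfold mult
  have : {i | f i = p} = ↑(Finset.Ico (colLen f (p + 1)) (colLen f p)) := by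
    ext i
    simp only [Set.mem_setOf_eq, Finset.coe_Ico, Set.mem_Ico]
    constructor
    · intro h
      constructor
      · by_contra hcon
        push_neg at hcon
        have := lt_colLen_iff hA hN (p := p + 1) (by omega) (i := i) |>.1 hcon
        omega
      · exact lt_colLen_iff hA hN hp |>.2 (by omega)
    · rintro ⟨h1, h2⟩
      have hle := lt_colLen_iff hA hN hp (i := i) |>.1 h2
      have : ¬ (i < colLen f (p + 1)) := by omega
      rw [lt_colLen_iff hA hN (by omega)] at this
      omega
  rw [this, Set.ncard_coe_finset, Nat.card_Ico]

lemma colLen_sub (f : ℕ → ℕ) (hA : Antitone f) {N : ℕ} (hN : ∀ i, N ≤ i → f i = 0)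
    {p : ℕ} (hp : 1 ≤ p) : colLen f (p+1) + mult f p = colLen f p := by
  rw [mult_eq_colLen hA hN hp]
  have := colLen_anti hN hp (le_of_lt (Nat.lt_succ_self p)) (f := f)
  simp only [Nat.succ_eq_add_one] at this
  omega

/-! ### Block identity: partial sums at block boundaries -/

lemma block_identity_aux (f : ℕ → ℕ) (hA : Antitone f) {N : ℕ} (hN : ∀ i, N ≤ i → f i = 0) :
    ∀ t v k, f 0 ≤ v + t → (∀ i, i < k → v < f i) → f k ≤ v →
      psum f k = ∑ q ∈ Finset.Ioc v (f 0), q * mult f q ∧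
      k = ∑ q ∈ Finset.Ioc v (f 0), mult f q := by
  intro t
  induction t with
  | zero =>
    intro v k hv hlt hk
    have hk0 : k = 0 := by
      by_contra h
      have := hlt 0 (by omega)
      omega
    have : Finset.Ioc v (f 0) = ∅ := by
      apply Finset.Ioc_eq_empty
      simp at hv ⊢
      omega
    simp [hk0, this, psum]
  | succ t ih =>
    intro v k hv hlt hk
    by_cases hbase : f 0 ≤ v
    · have hk0 : k = 0 := by
        by_contra h
        have := hlt 0 (by omega)
        omega
      have : Finset.Ioc v (f 0) = ∅ := by
        apply Finset.Ioc_eq_empty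
        simp
        omega
      simp [hk0, this, psum]
    · push_neg at hbase
      have hk'le : colLen f (v + 2) ≤ k := by
        by_contra h
        push_neg at h
        have := (lt_colLen_iff hA hN (p := v + 2) (by omega) (i := k)).1 h
        omega
      have hlt' : ∀ i, i < colLen f (v + 2) → v + 1 < f i := by
        intro i hi
        have h := (lt_colLen_iff hA hN (p := v + 2) (show 1 ≤ v + 2 by omega) (i := i)).1 hi
        omega
      have hfk' : f (colLen f (v + 2)) ≤ v + 1 := by
        have := colLen_spec hN (p := v + 2) (by omega) (f := f)
        omega
      obtain ⟨ihp, ihk⟩ := ih (v + 1) (colLen f (v + 2)) (by omega) hlt' hfk'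
      have hkcol : k = colLen f (v + 1) := by
        have h1 : colLen f (v + 1) ≤ k := Nat.sInf_le (by simp only [Set.mem_setOf_eq]; omega)
        have h2 : k ≤ colLen f (v + 1) := by
          rcases Nat.eq_zero_or_pos k with h0 | h0
          · omega
          · have h3 := (lt_colLen_iff hA hN (p := v + 1) (show 1 ≤ v + 1 by omega)
              (i := k - 1)).2 (by have := hlt (k - 1) (by omega); omega)
            omega
        omega
      have hmult : mult f (v + 1) = k - colLen f (v + 2) := by
        rw [mult_eq_colLen hA hN (by omega), ← hkcol]
      have hconst : ∀ i ∈ Finset.Ico (colLen f (v + 2)) k, f i = v + 1 := by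
        intro i hi
        simp only [Finset.mem_Ico] at hi
        have h1 := hA hi.1 (a := colLen f (v + 2))
        have h2 := hlt i hi.2
        omega
      have hpsum : psum f k = psum f (colLen f (v + 2)) + (v + 1) * (k - colLen f (v + 2)) := by
        rw [psum_add_interval f hk'le]
        rw [Finset.sum_congr rfl hconst]
        simp [Nat.card_Ico, mul_comm]
      have hins : Finset.Ioc v (f 0) = insert (v + 1) (Finset.Ioc (v + 1) (f 0)) := by
        ext x
        simp only [Finset.mem_Ioc, Finset.mem_insert]
        omega
      have hnotmem : (v + 1) ∉ Finset.Ioc (v + 1) (f 0) := by simp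
      constructor
      · rw [hins, Finset.sum_insert hnotmem, hpsum, ihp, hmult]
        ring
      · rw [hins, Finset.sum_insert hnotmem, ← ihk, hmult]
        omega

lemma block_identity (f : ℕ → ℕ) (hA : Antitone f) {N : ℕ} (hN : ∀ i, N ≤ i → f i = 0)
    {v k : ℕ} (hlt : ∀ i, i < k → v < f i) (hk : f k ≤ v) :
    psum f k = ∑ q ∈ Finset.Ioc v (f 0), q * mult f q ∧
      k = ∑ q ∈ Finset.Ioc v (f 0), mult f q :=
  block_identity_aux f hA hN (f 0) v k (by omega) hlt hk

/-! ### Parity of partial sums at drops, for types C and D -/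

lemma typeC_psum_even {f : ℕ → ℕ} (hA : Antitone f) {N : ℕ} (hN : ∀ i, N ≤ i → f i = 0)
    (hC : ∀ p, Odd p → Even (mult f p)) {k : ℕ} (hk : 1 ≤ k) (hdrop : f k < f (k - 1)) :
    Even (psum f k) := by
  have hlt : ∀ i, i < k → f k < f i := by
    intro i hi
    have := hA (show i ≤ k - 1 by omega)
    omega
  obtain ⟨hp, -⟩ := block_identity f hA hN hlt le_rfl
  rw [hp, even_iff_two_dvd]
  apply Finset.dvd_sum
  intro q hq
  rcases Nat.even_or_odd q with he | ho
  · exact Dvd.dvd.mul_right (even_iff_two_dvd.1 he) _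
  · exact Dvd.dvd.mul_left (even_iff_two_dvd.1 (hC q ho)) _

lemma typeD_psum_even {f : ℕ → ℕ} (hA : Antitone f) {N : ℕ} (hN : ∀ i, N ≤ i → f i = 0)
    (hD : ∀ p, 0 < p → Even p → Even (mult f p)) {k : ℕ} (hk : 1 ≤ k)
    (hdrop : f k < f (k - 1)) : Even (psum f k + k) := by
  have hlt : ∀ i, i < k → f k < f i := by
    intro i hi
    have := hA (show i ≤ k - 1 by omega)
    omega
  obtain ⟨hp, hkk⟩ := block_identity f hA hN hlt le_rfl
  have key : psum f k + k = ∑ q ∈ Finset.Ioc (f k) (f 0), (q * mult f q + mult f q) := by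
    rw [Finset.sum_add_distrib, ← hp, ← hkk]
  rw [key, even_iff_two_dvd]
  apply Finset.dvd_sum
  intro q hq
  simp only [Finset.mem_Ioc] at hq
  have hq1 : q * mult f q + mult f q = (q + 1) * mult f q := by ring
  rw [hq1]
  rcases Nat.even_or_odd q with he | ho
  · exact Dvd.dvd.mul_left (even_iff_two_dvd.1 (hD q (by omega) he)) _
  · exact Dvd.dvd.mul_right (even_iff_two_dvd.1 (by rcases ho with ⟨r, hr⟩; exact ⟨r + 1, by omega⟩)) _

/-! ### Converses: parity of partial sums at drops implies type C / D -/

lemma psum_colLen (f : ℕ → ℕ) (hA : Antitone f) {N : ℕ} (hN : ∀ i, N ≤ i → f i = 0)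
    {p : ℕ} (hp : 1 ≤ p) :
    psum f (colLen f p) = psum f (colLen f (p + 1)) + p * mult f p := by
  have hle : colLen f (p + 1) ≤ colLen f p := colLen_anti hN hp (by omega)
  rw [psum_add_interval f hle]
  congr 1
  have hconst : ∀ i ∈ Finset.Ico (colLen f (p + 1)) (colLen f p), f i = p := by
    intro i hi
    simp only [Finset.mem_Ico] at hi
    have h1 := (lt_colLen_iff hA hN hp).1 hi.2
    have h2 : ¬ (i < colLen f (p + 1)) := by omega
    rw [lt_colLen_iff hA hN (by omega)] at h2
    omega
  rw [Finset.sum_congr rfl hconst]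
  rw [mult_eq_colLen hA hN hp]
  simp [Nat.card_Ico, mul_comm]

lemma even_psum_colLen_of_drops {f : ℕ → ℕ} (hA : Antitone f) {N : ℕ}
    (hN : ∀ i, N ≤ i → f i = 0)
    (h : ∀ k, 1 ≤ k → f k < f (k - 1) → Even (psum f k)) {q : ℕ} (hq : 1 ≤ q) :
    Even (psum f (colLen f q)) := by
  rcases Nat.eq_zero_or_pos (colLen f q) with h0 | h0
  · simp [h0, psum]
  · apply h _ h0
    have h1 := colLen_spec hN hq (f := f)
    have h2 := (lt_colLen_iff hA hN hq (i := colLen f q - 1)).1 (by omega)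
    omega

lemma isTypeC_of_drops {f : ℕ → ℕ} (hA : Antitone f) {N : ℕ} (hN : ∀ i, N ≤ i → f i = 0)
    (hsize : Even (size f))
    (h : ∀ k, 1 ≤ k → f k < f (k - 1) → Even (psum f k)) : IsTypeC f := by
  refine ⟨⟨hA, N, hN⟩, hsize, ?_⟩
  intro p hodd
  have hp : 1 ≤ p := hodd.pos
  have h1 := even_psum_colLen_of_drops hA hN h hp
  have h2 := even_psum_colLen_of_drops hA hN h (show 1 ≤ p + 1 by omega)
  have h3 := psum_colLen f hA hN hp
  have hpm : Even (p * mult f p) := by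
    rw [Nat.even_iff] at h1 h2 ⊢
    omega
  rcases Nat.even_mul.mp hpm with he | he
  · exact absurd he (Nat.not_even_iff_odd.mpr hodd)
  · exact he

lemma isTypeD_of_drops {f : ℕ → ℕ} (hA : Antitone f) {N : ℕ} (hN : ∀ i, N ≤ i → f i = 0)
    (hsize : Even (size f))
    (h : ∀ k, 1 ≤ k → f k < f (k - 1) → Even (psum f k + k)) : IsTypeD f := by
  refine ⟨⟨hA, N, hN⟩, hsize, ?_⟩
  intro p hp heven
  have hcol : ∀ q, 1 ≤ q → Even (psum f (colLen f q) + colLen f q) := by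
    intro q hq
    rcases Nat.eq_zero_or_pos (colLen f q) with h0 | h0
    · simp [h0, psum]
    · apply h _ h0
      have h1 := colLen_spec hN hq (f := f)
      have h2 := (lt_colLen_iff hA hN hq (i := colLen f q - 1)).1 (by omega)
      omega
  have h1 := hcol p (by omega)
  have h2 := hcol (p + 1) (by omega)
  have h3 := psum_colLen f hA hN (show 1 ≤ p by omega)
  have h4 := colLen_sub f hA hN (show 1 ≤ p by omega)
  have hpm : Even (p * mult f p + mult f p) := by
    rw [Nat.even_iff] at h1 h2 ⊢
    omega
  have hpe : Even (p * mult f p) := heven.mul_right _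
  rw [Nat.even_iff] at hpm hpe ⊢
  omega

/-! ### Dominance can be checked at drops -/

lemma dom_of_drops {h c : ℕ → ℕ} (hAh : Antitone h) {Nh : ℕ} (hNh : ∀ i, Nh ≤ i → h i = 0)
    (hAc : Antitone c)
    (hdrop : ∀ k, 1 ≤ k → h k < h (k - 1) → psum h k ≤ psum c k) (k : ℕ) :
    psum h k ≤ psum c k := by
  classical
  by_contra hcon
  push_neg at hcon
  set P : ℕ → Prop := fun j => j = 0 ∨ h j < h (j - 1) with hP
  set k₀ := Nat.findGreatest P k with hk₀def
  have hk₀le : k₀ ≤ k := Nat.findGreatest_le k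
  have hk₀P : P k₀ := Nat.findGreatest_spec (Nat.zero_le k) (Or.inl rfl)
  have hconst : ∀ t, k₀ + t ≤ k → h (k₀ + t) = h k₀ := by
    intro t
    induction t with
    | zero => intro _; rfl
    | succ t ih =>
      intro ht
      have h1 : h (k₀ + t) = h k₀ := ih (by omega)
      have h2 : ¬ P (k₀ + t + 1) := by
        have hg := Nat.findGreatest_is_greatest (P := P) (n := k) (k := k₀ + t + 1)
        rw [← hk₀def] at hg
        exact hg (by omega) (by omega)
      simp only [hP, Nat.add_sub_cancel, not_or, not_lt] at h2
      have heq : k₀ + (t + 1) = k₀ + t + 1 := by omega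
      rw [heq]
      have h3 := hAh (show k₀ + t ≤ k₀ + t + 1 by omega)
      omega
  have hbase : psum h k₀ ≤ psum c k₀ := by
    rcases hk₀P with h0 | hd
    · simp [h0, psum]
    · have hk₀pos : 1 ≤ k₀ := by
        rcases Nat.eq_zero_or_pos k₀ with h' | h'
        · rw [h'] at hd; simp at hd
        · exact h'
      exact hdrop k₀ hk₀pos hd
  have hk₀v : h k₀ = h k := by
    have := hconst (k - k₀) (by omega)
    rw [show k₀ + (k - k₀) = k by omega] at this
    omega
  have hpsk : psum h k = psum h k₀ + (k - k₀) * h k := by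
    rw [psum_add_interval h hk₀le]
    congr 1
    have : ∀ i ∈ Finset.Ico k₀ k, h i = h k := by
      intro i hi
      simp only [Finset.mem_Ico] at hi
      have := hconst (i - k₀) (by omega)
      rw [show k₀ + (i - k₀) = i by omega] at this
      omega
    rw [Finset.sum_congr rfl this, Finset.sum_const, Nat.card_Ico, smul_eq_mul]
  rcases Nat.eq_zero_or_pos (h k) with hv0 | hvpos
  · rw [hv0, Nat.mul_zero] at hpsk
    have := psum_mono c hk₀le
    omega
  -- h k ≥ 1 : find the next drop k₁
  · have hne : {j | k < j ∧ h j < h k}.Nonempty :=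
      ⟨max Nh (k + 1), by
        simp only [Set.mem_setOf_eq]
        constructor
        · omega
        · rw [hNh _ (le_max_left _ _)]; omega⟩
    set k₁ := sInf {j | k < j ∧ h j < h k} with hk₁def
    have hk₁mem : k < k₁ ∧ h k₁ < h k := Nat.sInf_mem hne
    have hmid : ∀ j, k ≤ j → j < k₁ → h j = h k := by
      intro j hj1 hj2
      rcases Nat.eq_or_lt_of_le hj1 with rfl | hj
      · rfl
      · have hnm := Nat.notMem_of_lt_sInf (show j < sInf {j | k < j ∧ h j < h k} from hj2)
        simp only [Set.mem_setOf_eq, not_and, not_lt] at hnm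
        have := hAh hj1
        have := hnm hj
        omega
    have hdrop1 : psum h k₁ ≤ psum c k₁ := by
      apply hdrop k₁ (by omega)
      have := hmid (k₁ - 1) (by omega) (by omega)
      omega
    have hpsk1 : psum h k₁ = psum h k + (k₁ - k) * h k := by
      rw [psum_add_interval h (show k ≤ k₁ by omega)]
      congr 1
      have : ∀ i ∈ Finset.Ico k k₁, h i = h k := by
        intro i hi
        simp only [Finset.mem_Ico] at hi
        exact hmid i hi.1 hi.2
      rw [Finset.sum_congr rfl this, Finset.sum_const, Nat.card_Ico, smul_eq_mul]
    have hex : ∃ i, k₀ ≤ i ∧ i < k ∧ c i < h k := by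
      by_contra hno
      push_neg at hno
      have hsum : (k - k₀) * h k ≤ ∑ i ∈ Finset.Ico k₀ k, c i := by
        calc (k - k₀) * h k = ∑ _i ∈ Finset.Ico k₀ k, h k := by
              rw [Finset.sum_const, Nat.card_Ico, smul_eq_mul]
          _ ≤ ∑ i ∈ Finset.Ico k₀ k, c i := by
              apply Finset.sum_le_sum
              intro i hi
              simp only [Finset.mem_Ico] at hi
              exact hno i hi.1 hi.2
      have := psum_add_interval c hk₀le
      omega
    obtain ⟨i, hi1, hi2, hi3⟩ := hex
    have hsmall : ∑ j ∈ Finset.Ico k k₁, c j ≤ (k₁ - k) * (h k - 1) := by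
      calc ∑ j ∈ Finset.Ico k k₁, c j ≤ ∑ _j ∈ Finset.Ico k k₁, (h k - 1) := by
            apply Finset.sum_le_sum
            intro j hj
            simp only [Finset.mem_Ico] at hj
            have := hAc (show i ≤ j by omega)
            omega
        _ = (k₁ - k) * (h k - 1) := by
            rw [Finset.sum_const, Nat.card_Ico, smul_eq_mul]
    have hmul : (k₁ - k) * (h k - 1) + (k₁ - k) * 1 = (k₁ - k) * h k := by
      rw [← Nat.mul_add]
      congr 1
      omega
    have hc1 := psum_add_interval c (show k ≤ k₁ by omega)
    omega

/-! ### Transpose lemmas -/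

lemma transpose_antitone {f : ℕ → ℕ} (hA : Antitone f) {N : ℕ} (hN : ∀ i, N ≤ i → f i = 0) :
    Antitone (transpose f) := by
  intro i j hij
  rw [transpose_eq_colLen hA hN, transpose_eq_colLen hA hN]
  exact colLen_anti hN (by omega) (by omega)

lemma transpose_zero {f : ℕ → ℕ} (hA : Antitone f) {N : ℕ} (hN : ∀ i, N ≤ i → f i = 0)
    {i : ℕ} (hi : f 0 ≤ i) : transpose f i = 0 := by
  rw [transpose_eq_colLen hA hN, colLen_eq_zero (by omega)]

lemma psum_transpose {f : ℕ → ℕ} (hA : Antitone f) {N : ℕ} (hN : ∀ i, N ≤ i → f i = 0)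
    {K : ℕ} (hK : f 0 ≤ K) : psum (transpose f) K = size f := by
  classical
  have hcard : ∀ i : ℕ, colLen f (i + 1) =
      ((Finset.range N).filter (fun j => i + 1 ≤ f j)).card := by
    intro i
    have hfil : (Finset.range N).filter (fun j => i + 1 ≤ f j)
        = Finset.range (colLen f (i + 1)) := by
      ext j
      simp only [Finset.mem_filter, Finset.mem_range]
      constructor
      · rintro ⟨hj1, hj2⟩
        exact (lt_colLen_iff hA hN (by omega)).2 hj2
      · intro hj
        have h1 := (lt_colLen_iff hA hN (show 1 ≤ i + 1 by omega)).1 hj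
        have h2 := colLen_le hN (i + 1) (by omega) (f := f)
        exact ⟨by omega, h1⟩
    rw [hfil, Finset.card_range]
  have : psum (transpose f) K
      = ∑ i ∈ Finset.range K, ∑ j ∈ Finset.range N, (if i + 1 ≤ f j then 1 else 0) := by
    unfold psum
    apply Finset.sum_congr rfl
    intro i _
    rw [transpose_eq_colLen hA hN, hcard i, Finset.card_filter]
  rw [this, Finset.sum_comm]
  have : ∀ j ∈ Finset.range N,
      (∑ i ∈ Finset.range K, if i + 1 ≤ f j then 1 else 0) = f j := by
    intro j hj
    have hfj : f j ≤ K := le_trans (hA (Nat.zero_le j)) hK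
    rw [← Finset.card_filter]
    have : (Finset.range K).filter (fun i => i + 1 ≤ f j) = Finset.range (f j) := by
      ext i
      simp only [Finset.mem_filter, Finset.mem_range]
      omega
    rw [this, Finset.card_range]
  rw [Finset.sum_congr rfl this]
  exact (size_eq_psum hN).symm

/-! ### Uniqueness of collapses -/

lemma collapse_eq_of {T : (ℕ → ℕ) → Prop} {x c : ℕ → ℕ} (hc : IsCollapse T x c) :
    collapse T x = c := by
  have hex : ∃ c, IsCollapse T x c := ⟨c, hc⟩
  rw [collapse, dif_pos hex]
  have hc' := hex.choose_spec
  have h1 : Dom hex.choose c := hc.2.2 _ hc'.1 hc'.2.1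
  have h2 : Dom c hex.choose := hc'.2.2 _ hc.1 hc.2.1
  exact funext_of_psum_eq (fun k => le_antisymm (h1.2 k) (h2.2 k))

/-! ### `colLen` and `delRow` -/

lemma delRow_antitone {f : ℕ → ℕ} (hA : Antitone f) : Antitone (delRow f) :=
  fun i j hij => hA (by omega : j + 1 ≥ i + 1)

lemma delRow_zero {f : ℕ → ℕ} {N : ℕ} (hN : ∀ i, N ≤ i → f i = 0) :
    ∀ i, N ≤ i → delRow f i = 0 := fun i hi => hN (i + 1) (by omega)

lemma colLen_delRow {f : ℕ → ℕ} (hA : Antitone f) {N : ℕ} (hN : ∀ i, N ≤ i → f i = 0)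
    {p : ℕ} (hp : 1 ≤ p) (hfp : p ≤ f 0) :
    colLen f p = colLen (delRow f) p + 1 := by
  have hAd : Antitone (delRow f) := delRow_antitone hA
  have hNd : ∀ i, N ≤ i → delRow f i = 0 := delRow_zero hN
  set s := colLen (delRow f) p with hs
  have hspec : delRow f s < p := colLen_spec hNd hp
  have hmem : f (s + 1) < p := hspec
  have hub : colLen f p ≤ s + 1 := Nat.sInf_le hmem
  have hlb : s < colLen f p := by
    rw [lt_colLen_iff hA hN hp]
    rcases Nat.eq_zero_or_pos s with h0 | h0
    · rw [h0]; exact hfp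
    · have : s - 1 < colLen (delRow f) p := by omega
      have := (lt_colLen_iff hAd hNd hp).1 this
      show p ≤ f s
      have : delRow f (s - 1) = f s := by
        unfold delRow
        congr 1
        omega
      omega
  omega

/-! ### Explicit collapses -/

/-- Candidate for the D-collapse of a pair-parity partition `g`:
in each pair `(g 2m, g (2m+1))` with both entries even and distinct,
move one box from the top row to the bottom row of the pair. -/
def epsFn (g : ℕ → ℕ) (m : ℕ) : ℕ :=
  if g (2 * m) % 2 = 0 ∧ g (2 * m + 1) < g (2 * m) then 1 else 0

def cDfun (g : ℕ → ℕ) : ℕ → ℕ :=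
  fun i => if i % 2 = 0 then g i - epsFn g (i / 2) else g i + epsFn g (i / 2)

def cCfun (g : ℕ → ℕ) (A : ℕ) : ℕ → ℕ := fun i => if i < A then cDfun g i + 1 else 0

lemma cD_at_even (g : ℕ → ℕ) (m : ℕ) : cDfun g (2 * m) = g (2 * m) - epsFn g m := by
  unfold cDfun
  rw [if_pos (by omega), show 2 * m / 2 = m by omega]

lemma cD_at_odd (g : ℕ → ℕ) (m : ℕ) : cDfun g (2 * m + 1) = g (2 * m + 1) + epsFn g m := by
  unfold cDfun
  rw [if_neg (by omega), show (2 * m + 1) / 2 = m by omega]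

theorem stmt_9_aux (a n : ℕ) (han : n ≤ a) (d : ℕ → ℕ)
    (hd : IsTypeC d) (hsize : size d = 2 * n + 2 * a) (hr1 : d 0 = 2 * a) :
    (IsTypeC (delRow d) ∧ size (delRow d) = 2 * n) ∧
    numParts (collapseC (transpose d)) = 2 * a ∧
    delCol (collapseC (transpose d)) = collapseD (transpose (delRow d)) := by
  obtain ⟨⟨hAd, Nd, hNd⟩, hEd, hCd⟩ := hd
  -- size of the first-row-removed partition
  have hsize' : size (delRow d) = 2 * n := by
    have h1 : size d = psum d (Nd + 1) := size_eq_psum (fun i hi => hNd i (by omega))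
    have h2 : size (delRow d) = psum (delRow d) Nd := size_eq_psum (delRow_zero hNd)
    have h3 : psum d (Nd + 1) = psum (delRow d) Nd + d 0 := by
      unfold psum delRow
      rw [Finset.sum_range_succ']
    omega
  have hAd' : Antitone (delRow d) := delRow_antitone hAd
  have hNd' := delRow_zero hNd (f := d)
  have hd'0 : delRow d 0 ≤ 2 * a := by
    have h := hAd (show (0:ℕ) ≤ 1 by omega)
    show d 1 ≤ 2 * a
    omega
  -- (i): delRow d is of type C
  have hmult' : ∀ p, Odd p → Even (mult (delRow d) p) := by
    intro p hodd
    have hp1 : 1 ≤ p := by rcases hodd with ⟨r, hr⟩; omega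
    rcases le_or_gt p (2 * a) with hple | hpgt
    · have hpne : p ≠ 2 * a := by
        rintro rfl
        rw [Nat.odd_iff] at hodd
        omega
      have e1 := mult_eq_colLen hAd' hNd' hp1 (f := delRow d)
      have e2 := mult_eq_colLen hAd hNd hp1 (f := d)
      have e3 := colLen_delRow hAd hNd hp1 (by omega)
      have e4 := colLen_delRow hAd hNd (show 1 ≤ p + 1 by omega) (by omega)
      have h5 := hCd p hodd
      rw [Nat.even_iff] at h5 ⊢
      omega
    · have z1 : colLen (delRow d) p = 0 := colLen_eq_zero (by omega)
      have z2 : colLen (delRow d) (p + 1) = 0 := colLen_eq_zero (by omega)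
      rw [mult_eq_colLen hAd' hNd' hp1, z1, z2]
      exact Even.zero
  have hTC' : IsTypeC (delRow d) :=
    ⟨⟨hAd', Nd, hNd'⟩, by rw [hsize']; exact ⟨n, by omega⟩, hmult'⟩
  -- the transpose g of delRow d
  set g := transpose (delRow d) with hgdef
  have hgcol : ∀ i, g i = colLen (delRow d) (i + 1) := fun i =>
    transpose_eq_colLen hAd' hNd' i
  have hNg : ∀ i, 2 * a ≤ i → g i = 0 := fun i hi =>
    transpose_zero hAd' hNd' (by omega)
  have hAg : Antitone g := transpose_antitone hAd' hNd'
  have hpsg2a : psum g (2 * a) = 2 * n := by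
    rw [hgdef, psum_transpose hAd' hNd' (by omega)]
    exact hsize'
  have hsizeg : size g = 2 * n := by rw [size_eq_psum hNg, hpsg2a]
  have hpsgstable : ∀ k, 2 * a ≤ k → psum g k = 2 * n := fun k hk => by
    rw [psum_stable hNg hk, hpsg2a]
  -- pair parity of g
  have hpar : ∀ m, g (2 * m) % 2 = g (2 * m + 1) % 2 := by
    intro m
    have h1 := hmult' (2 * m + 1) ⟨m, by omega⟩
    have h2 := colLen_sub (delRow d) hAd' hNd' (show 1 ≤ 2 * m + 1 by omega)
    have e1 := hgcol (2 * m)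
    have e2 := hgcol (2 * m + 1)
    rw [Nat.even_iff] at h1
    omega
  have hgev : ∀ m, psum g (2 * m) % 2 = 0 := by
    intro m
    induction m with
    | zero => simp [psum]
    | succ m ih =>
      have e1 : psum g (2 * (m + 1)) = psum g (2 * m) + g (2 * m) + g (2 * m + 1) := by
        rw [show 2 * (m + 1) = (2 * m + 1) + 1 by omega, psum_succ, psum_succ]
      have := hpar m
      omega
  -- the explicit D-collapse c' of g
  set c' := cDfun g with hc'def
  have heps_le : ∀ m, epsFn g m = 0 ∨
      (epsFn g m = 1 ∧ g (2 * m) % 2 = 0 ∧ g (2 * m + 1) < g (2 * m)) := by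
    intro m
    unfold epsFn
    by_cases hc : g (2 * m) % 2 = 0 ∧ g (2 * m + 1) < g (2 * m)
    · right; rw [if_pos hc]; exact ⟨rfl, hc⟩
    · left; rw [if_neg hc]
  have heps_one : ∀ m, g (2 * m) % 2 = 0 → g (2 * m + 1) < g (2 * m) → epsFn g m = 1 := by
    intro m h1 h2
    unfold epsFn
    rw [if_pos ⟨h1, h2⟩]
  have hc'even : ∀ m, c' (2 * m) = g (2 * m) - epsFn g m := by
    intro m; rw [hc'def]; exact cD_at_even g m
  have hc'odd : ∀ m, c' (2 * m + 1) = g (2 * m + 1) + epsFn g m := by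
    intro m; rw [hc'def]; exact cD_at_odd g m
  have hc'zero : ∀ i, 2 * a ≤ i → c' i = 0 := by
    intro i hi
    rcases Nat.even_or_odd i with ⟨m, hm⟩ | ⟨m, hm⟩
    · rw [show i = 2 * m by omega, hc'even m]
      have hg0 : g (2 * m) = 0 := hNg _ (by omega)
      rcases heps_le m with h | ⟨h, _, hlt⟩
      · rw [hg0, h]
      · rw [hg0] at hlt; omega
    · have h2m : 2 * a ≤ 2 * m := by omega
      rw [show i = 2 * m + 1 by omega, hc'odd m]
      have hg0 : g (2 * m) = 0 := hNg _ h2m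
      have hg1 : g (2 * m + 1) = 0 := hNg _ (by omega)
      rcases heps_le m with h | ⟨h, _, hlt⟩
      · rw [hg1, h]
      · rw [hg0] at hlt; omega
  have hAc' : Antitone c' := by
    apply antitone_nat_of_succ_le
    intro i
    rcases Nat.even_or_odd i with ⟨m, hm⟩ | ⟨m, hm⟩
    · rw [show i = 2 * m by omega, hc'even m, hc'odd m]
      have hp := hpar m
      rcases heps_le m with h | ⟨h, hpe, hlt⟩
      · have := hAg (show 2 * m ≤ 2 * m + 1 by omega)
        omega
      · omega
    · rw [show i = 2 * m + 1 by omega, show (2 * m + 1) + 1 = 2 * (m + 1) by omega,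
        hc'odd m, hc'even (m + 1)]
      have h1 := hAg (show 2 * m + 1 ≤ 2 * (m + 1) by omega)
      omega
  have hpc'even : ∀ m, psum c' (2 * m) = psum g (2 * m) := by
    intro m
    induction m with
    | zero => simp [psum]
    | succ m ih =>
      have e1 : psum c' (2 * (m + 1)) = psum c' (2 * m) + c' (2 * m) + c' (2 * m + 1) := by
        rw [show 2 * (m + 1) = (2 * m + 1) + 1 by omega, psum_succ, psum_succ]
      have e2 : psum g (2 * (m + 1)) = psum g (2 * m) + g (2 * m) + g (2 * m + 1) := by
        rw [show 2 * (m + 1) = (2 * m + 1) + 1 by omega, psum_succ, psum_succ]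
      have e3 := hc'even m
      have e4 := hc'odd m
      rcases heps_le m with h | ⟨h, _, hlt⟩ <;> omega
  have hpc'odd : ∀ m, psum c' (2 * m + 1) + epsFn g m = psum g (2 * m + 1) := by
    intro m
    have e1 : psum c' (2 * m + 1) = psum c' (2 * m) + c' (2 * m) := psum_succ c' (2 * m)
    have e2 : psum g (2 * m + 1) = psum g (2 * m) + g (2 * m) := psum_succ g (2 * m)
    have e3 := hc'even m
    have e5 := hpc'even m
    rcases heps_le m with h | ⟨h, _, hlt⟩ <;> omega
  have hpc'le : ∀ k, psum c' k ≤ psum g k := by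
    intro k
    rcases Nat.even_or_odd k with ⟨m, hm⟩ | ⟨m, hm⟩
    · rw [show k = 2 * m by omega, hpc'even m]
    · rw [show k = 2 * m + 1 by omega]
      have := hpc'odd m
      omega
  have hpc'2a : psum c' (2 * a) = 2 * n := by
    have := hpc'even a
    omega
  have hsizec' : size c' = 2 * n := by rw [size_eq_psum hc'zero, hpc'2a]
  have hc'drops : ∀ k, 1 ≤ k → c' k < c' (k - 1) → Even (psum c' k + k) := by
    intro k hk hdrop
    rw [Nat.even_iff]
    rcases Nat.even_or_odd k with ⟨m, hm⟩ | ⟨m, hm⟩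
    · have hk2 : k = 2 * m := by omega
      subst hk2
      have := hgev m
      have := hpc'even m
      omega
    · have hk2 : k = 2 * m + 1 := by omega
      subst hk2
      have e0 := hpc'odd m
      have e2 : psum g (2 * m + 1) = psum g (2 * m) + g (2 * m) := psum_succ g (2 * m)
      have e3 := hgev m
      rcases heps_le m with h | ⟨h, hpe, hlt⟩
      · have hdrop' : c' (2 * m + 1) < c' (2 * m) := by
          rw [show 2 * m + 1 - 1 = 2 * m by omega] at hdrop
          exact hdrop
        rw [hc'even m, hc'odd m, h] at hdrop'
        have hodd : g (2 * m) % 2 = 1 := by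
          by_contra hcon
          have h0 : g (2 * m) % 2 = 0 := by omega
          have := heps_one m h0 (by omega)
          omega
        omega
      · omega
  have hTD : IsTypeD c' :=
    isTypeD_of_drops hAc' hc'zero (by rw [hsizec']; exact ⟨n, by omega⟩) hc'drops
  have hDomc'g : Dom c' g := ⟨by rw [hsizec', hsizeg], hpc'le⟩
  have hMaxD : ∀ f, IsTypeD f → Dom f g → Dom f c' := by
    intro f hTDf hDomf
    obtain ⟨⟨hAf, Nf, hNf⟩, _, hmf⟩ := hTDf
    refine ⟨by rw [hDomf.1, hsizeg, hsizec'], ?_⟩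
    intro k
    have hle := hDomf.2
    rcases Nat.even_or_odd k with ⟨m, hm⟩ | ⟨m, hm⟩
    · have hk2 : k = 2 * m := by omega
      subst hk2
      rw [hpc'even m]
      exact hle _
    · have hk2 : k = 2 * m + 1 := by omega
      subst hk2
      rcases heps_le m with h0 | ⟨h1, hpe2, hlt⟩
      · have := hpc'odd m
        have := hle (2 * m + 1)
        omega
      · have hstrict : psum f (2 * m + 1) < psum g (2 * m + 1) := by
          by_contra hcon
          have heq : psum f (2 * m + 1) = psum g (2 * m + 1) :=
            le_antisymm (hle _) (by omega)
          have e1 : psum f (2 * m + 1) = psum f (2 * m) + f (2 * m) := psum_succ f (2 * m)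
          have e2 : psum f (2 * m + 2) = psum f (2 * m + 1) + f (2 * m + 1) :=
            psum_succ f (2 * m + 1)
          have e3 : psum g (2 * m + 1) = psum g (2 * m) + g (2 * m) := psum_succ g (2 * m)
          have e4 : psum g (2 * m + 2) = psum g (2 * m + 1) + g (2 * m + 1) :=
            psum_succ g (2 * m + 1)
          have l1 := hle (2 * m)
          have l2 := hle (2 * m + 2)
          have hdr : f (2 * m + 1) < f (2 * m + 1 - 1) := by
            rw [show 2 * m + 1 - 1 = 2 * m by omega]
            omega
          have hev := typeD_psum_even hAf hNf hmf (show 1 ≤ 2 * m + 1 by omega) hdr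
          rw [Nat.even_iff] at hev
          have := hgev m
          omega
        have := hpc'odd m
        omega
  have hCollD : IsCollapse IsTypeD g c' := ⟨hTD, hDomc'g, hMaxD⟩
  have hcollDg : collapseD g = c' := collapse_eq_of hCollD
  -- the transpose e of d
  set e := transpose d with hedef
  have hNe : ∀ i, 2 * a ≤ i → e i = 0 := fun i hi => transpose_zero hAd hNd (by omega)
  have hAe : Antitone e := transpose_antitone hAd hNd
  have hge : ∀ i, i < 2 * a → e i = g i + 1 := by
    intro i hi
    rw [hedef, hgdef, transpose_eq_colLen hAd hNd, transpose_eq_colLen hAd' hNd']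
    exact colLen_delRow hAd hNd (by omega) (by omega)
  have hpe : ∀ k, psum e k = psum g k + min k (2 * a) := by
    intro k
    induction k with
    | zero => simp [psum]
    | succ k ih =>
      rw [psum_succ, psum_succ]
      rcases lt_or_ge k (2 * a) with h | h
      · rw [hge k h]
        omega
      · rw [hNe k h, hNg k h]
        omega
  -- the explicit C-collapse c'' of e
  set c'' := cCfun g (2 * a) with hc''def
  have hc''lt : ∀ i, i < 2 * a → c'' i = c' i + 1 := by
    intro i hi
    rw [hc''def, hc'def]
    unfold cCfun
    rw [if_pos hi]
  have hc''ge : ∀ i, 2 * a ≤ i → c'' i = 0 := by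
    intro i hi
    rw [hc''def]
    unfold cCfun
    rw [if_neg (by omega)]
  have hpc'' : ∀ k, psum c'' k = psum c' k + min k (2 * a) := by
    intro k
    induction k with
    | zero => simp [psum]
    | succ k ih =>
      rw [psum_succ, psum_succ]
      rcases lt_or_ge k (2 * a) with h | h
      · rw [hc''lt k h]
        omega
      · rw [hc''ge k h, hc'zero k h]
        omega
  have hAc'' : Antitone c'' := by
    apply antitone_nat_of_succ_le
    intro i
    rcases lt_or_ge (i + 1) (2 * a) with h | h
    · rw [hc''lt _ h, hc''lt _ (by omega)]
      have := hAc' (show i ≤ i + 1 by omega)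
      omega
    · rw [hc''ge _ h]
      omega
  have hsizec'' : size c'' = 2 * n + 2 * a := by
    rw [size_eq_psum hc''ge, hpc'' (2 * a)]
    omega
  have hsizee : size e = 2 * n + 2 * a := by
    rw [size_eq_psum hNe, hpe (2 * a), hpsg2a]
    omega
  have hc''drops : ∀ k, 1 ≤ k → c'' k < c'' (k - 1) → Even (psum c'' k) := by
    intro k hk hdrop
    rw [Nat.even_iff]
    rcases lt_or_ge k (2 * a) with h | h
    · have hd' : c' k < c' (k - 1) := by
        rw [hc''lt _ h, hc''lt _ (by omega)] at hdrop
        omega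
      have hp1 := hc'drops k hk hd'
      rw [Nat.even_iff] at hp1
      have := hpc'' k
      omega
    · by_cases hk2 : k = 2 * a
      · subst hk2
        have := hpc'' (2 * a)
        have := hpc'2a
        omega
      · exfalso
        have h1 : c'' (k - 1) = 0 := hc''ge _ (by omega)
        omega
  have hTCc'' : IsTypeC c'' :=
    isTypeC_of_drops hAc'' hc''ge (by rw [hsizec'']; exact ⟨n + a, by omega⟩) hc''drops
  have hDomc''e : Dom c'' e := by
    refine ⟨by rw [hsizec'', hsizee], ?_⟩
    intro k
    rw [hpc'' k, hpe k]
    have := hpc'le k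
    omega
  have hMaxC : ∀ f, IsTypeC f → Dom f e → Dom f c'' := by
    intro f hTCf hDomf
    obtain ⟨⟨hAf, Nf, hNf⟩, _, hmf⟩ := hTCf
    refine ⟨by rw [hDomf.1, hsizee, hsizec''], ?_⟩
    apply dom_of_drops hAf hNf hAc''
    intro k hk hdropf
    have hevf := typeC_psum_even hAf hNf hmf hk hdropf
    have hlek := hDomf.2 k
    rw [hpe k] at hlek
    rw [hpc'' k]
    rcases lt_or_ge k (2 * a) with h | h
    · rcases Nat.even_or_odd k with ⟨m, hm⟩ | ⟨m, hm⟩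
      · have hk2 : k = 2 * m := by omega
        subst hk2
        rw [hpc'even m]
        omega
      · have hk2 : k = 2 * m + 1 := by omega
        subst hk2
        rcases heps_le m with h0 | ⟨h1, hpe2, hlt2⟩
        · have := hpc'odd m
          omega
        · have e0 := hpc'odd m
          have e2 : psum g (2 * m + 1) = psum g (2 * m) + g (2 * m) := psum_succ g (2 * m)
          have e3 := hgev m
          rw [Nat.even_iff] at hevf
          omega
    · have s1 : psum g k = 2 * n := hpsgstable k h
      have s2 : psum c' k = 2 * n := by
        rw [psum_stable hc'zero h, hpc'2a]
      omega
  have hCollC : IsCollapse IsTypeC e c'' := ⟨hTCc'', hDomc''e, hMaxC⟩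
  have hcollCe : collapseC e = c'' := collapse_eq_of hCollC
  -- conclusion
  refine ⟨⟨hTC', hsize'⟩, ?_, ?_⟩
  · rw [hcollCe]
    unfold numParts
    have hset : {j | 0 < c'' j} = ↑(Finset.range (2 * a)) := by
      ext j
      simp only [Set.mem_setOf_eq, Finset.coe_range, Set.mem_Iio]
      constructor
      · intro hj
        by_contra hc
        push_neg at hc
        rw [hc''ge j (by omega)] at hj
        omega
      · intro hj
        rw [hc''lt j hj]
        omega
    rw [hset, Set.ncard_coe_finset, Finset.card_range]
  · rw [hcollCe, hcollDg]
    funext i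
    show c'' i - 1 = c' i
    rcases lt_or_ge i (2 * a) with h | h
    · rw [hc''lt i h]
      omega
    · rw [hc''ge i h, hc'zero i h]

/-- for integers `a ≥ n ≥ 0` and a type-C partition `d` of size
`2n+2a` with largest part `2a`: (i) `∇̌(d)` is a type-C partition of size `2n`;
(ii) the C-collapse of `dᵗ` has exactly `2a` parts; (iii) `∇(C-collapse of dᵗ)`
equals the D-collapse of `(∇̌(d))ᵗ`. -/
theorem stmt_9 (a n : ℕ) (han : n ≤ a) (d : ℕ → ℕ)
    (hd : IsTypeC d) (hsize : size d = 2 * n + 2 * a) (hr1 : d 0 = 2 * a) :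
    (IsTypeC (delRow d) ∧ size (delRow d) = 2 * n) ∧
    numParts (collapseC (transpose d)) = 2 * a ∧
    delCol (collapseC (transpose d)) = collapseD (transpose (delRow d)) := by
  exact stmt_9_aux a n han d hd hsize hr1
end

section
/- Let a ≥ n ≥ 0 be integers and let e be a partition of size 2n+2a with exactly 2a parts. Then the C-collapse of e has exactly 2a parts, and ∇(C-collapse of e) equals the D-collapse of ∇(e). -/
set_option linter.unusedVariables false
namespace Stmt10
open Finset

lemma psum_succ (f : ℕ → ℕ) (k : ℕ) : psum f (k+1) = psum f k + f k :=
  Finset.sum_range_succ f k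

lemma psum_mono (f : ℕ → ℕ) {i j : ℕ} (h : i ≤ j) : psum f i ≤ psum f j :=
  Finset.sum_le_sum_of_subset (Finset.range_subset_range.mpr h)

lemma size_eq_psum {f : ℕ → ℕ} {N : ℕ} (h : ∀ i, N ≤ i → f i = 0) :
    size f = psum f N :=
  tsum_eq_sum (fun i hi => h i (by simpa [Finset.mem_range, Nat.not_lt] using hi))

lemma psum_le_size {f : ℕ → ℕ} (hp : IsPartition f) (k : ℕ) : psum f k ≤ size f := by
  obtain ⟨N, hN⟩ := hp.2
  have h : ∀ i, max k N ≤ i → f i = 0 := fun i hi => hN i (le_trans (le_max_right _ _) hi)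
  rw [size_eq_psum h]
  exact psum_mono f (le_max_left _ _)

lemma lower_mem_iff {S : Set ℕ} (hfin : S.Finite)
    (hlow : ∀ ⦃i j : ℕ⦄, i ≤ j → j ∈ S → i ∈ S) (i : ℕ) : i ∈ S ↔ i < S.ncard := by
  rw [Set.ncard_eq_toFinset_card S hfin]
  constructor
  · intro hi
    have hsub : (Finset.range (i+1)) ⊆ hfin.toFinset := by
      intro j hj
      rw [Set.Finite.mem_toFinset]
      exact hlow (Nat.lt_succ_iff.mp (Finset.mem_range.mp hj)) hi
    have := Finset.card_le_card hsub
    rw [Finset.card_range] at this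
    omega
  · intro hi
    by_contra hmem
    have hsub : hfin.toFinset ⊆ Finset.range i := by
      intro j hj
      rw [Set.Finite.mem_toFinset] at hj
      rw [Finset.mem_range]
      by_contra hji
      exact hmem (hlow (Nat.le_of_not_lt hji) hj)
    have := Finset.card_le_card hsub
    rw [Finset.card_range] at this
    omega

lemma parts_finite {f : ℕ → ℕ} (hp : IsPartition f) : {j | 0 < f j}.Finite := by
  obtain ⟨N, hN⟩ := hp.2
  apply Set.Finite.subset (Finset.range N).finite_toSet
  intro j hj
  simp only [Finset.coe_range, Set.mem_Iio]
  by_contra h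
  have := hN j (Nat.le_of_not_lt h)
  simp only [Set.mem_setOf_eq] at hj
  omega

lemma pos_iff_lt_numParts {f : ℕ → ℕ} (hp : IsPartition f) (i : ℕ) :
    0 < f i ↔ i < numParts f :=
  lower_mem_iff (parts_finite hp)
    (fun i j hij hj => lt_of_lt_of_le hj (hp.1 hij)) i

lemma part_eq_zero {f : ℕ → ℕ} (hp : IsPartition f) {i : ℕ} (h : numParts f ≤ i) :
    f i = 0 := by
  have := (pos_iff_lt_numParts hp i).not
  omega

lemma size_eq_psum_numParts {f : ℕ → ℕ} (hp : IsPartition f) :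
    size f = psum f (numParts f) :=
  size_eq_psum (fun _ hi => part_eq_zero hp hi)

lemma numParts_le_size {f : ℕ → ℕ} (hp : IsPartition f) : numParts f ≤ size f := by
  have h1 : numParts f ≤ psum f (numParts f) := by
    have : ∀ i ∈ Finset.range (numParts f), 1 ≤ f i := fun i hi =>
      (pos_iff_lt_numParts hp i).mpr (Finset.mem_range.mp hi)
    calc numParts f = ∑ _i ∈ Finset.range (numParts f), 1 := by simp
    _ ≤ psum f (numParts f) := Finset.sum_le_sum this
  exact h1.trans (psum_le_size hp _)

lemma dom_refl (f : ℕ → ℕ) : Dom f f := ⟨rfl, fun _ => le_rfl⟩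

lemma dom_trans {f g h : ℕ → ℕ} (h1 : Dom f g) (h2 : Dom g h) : Dom f h :=
  ⟨h1.1.trans h2.1, fun k => (h1.2 k).trans (h2.2 k)⟩

lemma dom_antisymm {f g : ℕ → ℕ} (h1 : Dom f g) (h2 : Dom g f) : f = g := by
  funext i
  have hk : ∀ k, psum f k = psum g k := fun k => le_antisymm (h1.2 k) (h2.2 k)
  have h3 := hk (i+1)
  rw [psum_succ, psum_succ, hk i] at h3
  omega

lemma isCollapse_unique {T : (ℕ → ℕ) → Prop} {d c1 c2 : ℕ → ℕ}
    (h1 : IsCollapse T d c1) (h2 : IsCollapse T d c2) : c1 = c2 :=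
  dom_antisymm (h2.2.2 c1 h1.1 h1.2.1) (h1.2.2 c2 h2.1 h2.2.1)

lemma collapse_eq {T : (ℕ → ℕ) → Prop} {d c : ℕ → ℕ} (h : IsCollapse T d c) :
    collapse T d = c := by
  have hex : ∃ c, IsCollapse T d c := ⟨c, h⟩
  rw [collapse, dif_pos hex]
  exact isCollapse_unique hex.choose_spec h


/-- Parity-twisted type condition: `ε = 0` gives type C, `ε = 1` gives type D. -/
def TypeW (ε : ℕ) (f : ℕ → ℕ) : Prop :=
  IsPartition f ∧ Even (size f) ∧ ∀ k, f (k+1) < f k → Even (psum f (k+1) + ε * (k+1))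

def IsBad (ε : ℕ) (f : ℕ → ℕ) (k : ℕ) : Prop :=
  f (k+1) < f k ∧ Odd (psum f (k+1) + ε * (k+1))

def IsCW (ε : ℕ) (d c : ℕ → ℕ) : Prop :=
  TypeW ε c ∧ Dom c d ∧ ∀ h, TypeW ε h → Dom h d → Dom h c

def Qc (f : ℕ → ℕ) (r j : ℕ) : Prop :=
  r < j ∧ f j + 1 ≤ f (j-1) - (if j - 1 = r then 1 else 0)

def IsStep (ε : ℕ) (f : ℕ → ℕ) (r s : ℕ) : Prop :=
  IsBad ε f r ∧ (∀ k, k < r → ¬ IsBad ε f k) ∧ Qc f r s ∧ ∀ j, j < s → ¬ Qc f r j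

def move (f : ℕ → ℕ) (r s : ℕ) : ℕ → ℕ :=
  fun i => if i = r then f i - 1 else if i = s then f i + 1 else f i

noncomputable def mea (f : ℕ → ℕ) : ℕ := ∑ k ∈ Finset.range (size f + 2), psum f k

lemma typeW_of_no_bad {ε : ℕ} {f : ℕ → ℕ} (hp : IsPartition f) (hev : Even (size f))
    (h : ∀ k, ¬ IsBad ε f k) : TypeW ε f := by
  refine ⟨hp, hev, fun k hk => ?_⟩
  have := h k
  rw [IsBad, not_and] at this
  exact Nat.not_odd_iff_even.mp (this hk)

/-- Going down through a block of parts with even `f m + ε`, an odd partial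
`G`-sum at the top yields a strictly earlier bad index. -/
lemma bad_of_even_inc {ε : ℕ} {f : ℕ → ℕ} (hp : IsPartition f) {m : ℕ}
    (hodd : Odd (psum f (m+1) + ε * (m+1))) (heven : Even (f m + ε)) :
    ∃ k, k < m ∧ IsBad ε f k := by
  classical
  have hex : ∃ j, f j = f m := ⟨m, rfl⟩
  set k0 := Nat.find hex with hk0def
  have hk0le : k0 ≤ m := Nat.find_le rfl
  have hk0 : f k0 = f m := Nat.find_spec hex
  have hblock : ∀ j, k0 ≤ j → j ≤ m → f j = f m := fun j h1 h2 =>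
    le_antisymm (hk0 ▸ hp.1 h1) (hp.1 h2)
  obtain ⟨t, ht⟩ : ∃ t, m + 1 = k0 + t := ⟨m + 1 - k0, by omega⟩
  have hsum : psum f (k0 + t) = psum f k0 + t * f m := by
    have hc : ∀ j ∈ Finset.Ico k0 (k0+t), f j = f m := by
      intro j hj
      rw [Finset.mem_Ico] at hj
      exact hblock j hj.1 (by omega)
    rw [psum, psum, ← Finset.sum_range_add_sum_Ico f (show k0 ≤ k0 + t by omega),
        Finset.sum_congr rfl hc, Finset.sum_const]
    simp [mul_comm]
  have hX : Odd (psum f k0 + ε * k0) := by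
    rw [ht] at hodd
    have h3 : psum f (k0+t) + ε*(k0+t) = (psum f k0 + ε*k0) + t*(f m + ε) := by
      rw [hsum]; ring
    rw [h3] at hodd
    have h2 : Even (t * (f m + ε)) := heven.mul_left t
    rw [Nat.odd_iff] at hodd ⊢
    rw [Nat.even_iff] at h2
    omega
  have hk0pos : 1 ≤ k0 := by
    by_contra h
    have : k0 = 0 := by omega
    rw [this] at hX
    simp [psum] at hX
  refine ⟨k0 - 1, by omega, ?_, ?_⟩
  · have h1 : f (k0 - 1) ≠ f m := Nat.find_min hex (by omega)
    have h2 : f k0 ≤ f (k0 - 1) := hp.1 (by omega)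
    have h3 : k0 - 1 + 1 = k0 := by omega
    rw [h3, hk0]
    omega
  · have h3 : k0 - 1 + 1 = k0 := by omega
    rw [h3]
    exact hX

lemma odd_inc_of_minbad {ε : ℕ} {f : ℕ → ℕ} (hp : IsPartition f) {r : ℕ}
    (hbr : IsBad ε f r) (hmin : ∀ k, k < r → ¬ IsBad ε f k) : Odd (f r + ε) := by
  rcases Nat.even_or_odd (f r + ε) with he | ho
  · obtain ⟨k, hk, hbad⟩ := bad_of_even_inc hp hbr.2 he
    exact absurd hbad (hmin k hk)
  · exact ho

lemma exists_drop {f : ℕ → ℕ} (hp : IsPartition f) {m : ℕ} (hm : 0 < f m) :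
    ∃ j, m ≤ j ∧ f (j+1) < f j := by
  by_contra h
  push_neg at h
  have hconst : ∀ i, m ≤ i → f i = f m := by
    intro i hi
    induction i, hi using Nat.le_induction with
    | base => rfl
    | succ k hk ih =>
      refine le_antisymm (hp.1 (by omega)) ?_
      rw [← ih]
      exact h k hk
  obtain ⟨N, hN⟩ := hp.2
  have h1 := hconst (max m N) (le_max_left _ _)
  have h2 := hN (max m N) (le_max_right _ _)
  omega

section StepFacts

variable {ε : ℕ} {f : ℕ → ℕ} {r s : ℕ}

lemma step_drop (hst : IsStep ε f r s) : f (r+1) < f r := hst.1.1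

lemma step_rs (hst : IsStep ε f r s) : r < s := hst.2.2.1.1

lemma step_Q (hst : IsStep ε f r s) :
    f s + 1 ≤ f (s-1) - (if s - 1 = r then 1 else 0) := hst.2.2.1.2

lemma step_odd_inc (hp : IsPartition f) (hst : IsStep ε f r s) : Odd (f r + ε) :=
  odd_inc_of_minbad hp hst.1 hst.2.1

/-- The parts strictly between `r` and `s` form a constant run. -/
lemma step_run (hp : IsPartition f) (hst : IsStep ε f r s) :
    ∀ k, r + 1 ≤ k → k < s → f k = f (r+1) := by
  intro k hk1 hk2
  induction k, hk1 using Nat.le_induction with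
  | base => rfl
  | succ k hk ih =>
    have hk2' : k < s := by omega
    have hik := ih hk2'
    have hnq := hst.2.2.2 (k+1) hk2
    rw [Qc, not_and] at hnq
    have h2 := hnq (by omega)
    have h3 : k + 1 - 1 = k := by omega
    rw [h3, if_neg (by omega)] at h2
    have h4 : f k ≤ f (k+1) := by omega
    have h5 : f (k+1) ≤ f k := hp.1 (by omega)
    omega

lemma step_first (hst : IsStep ε f r s) (h : r + 1 < s) : f r = f (r+1) + 1 := by
  have hnq := hst.2.2.2 (r+1) h
  rw [Qc, not_and] at hnq
  have h2 := hnq (by omega)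
  have h3 : r + 1 - 1 = r := by omega
  rw [h3, if_pos rfl] at h2
  have hd := step_drop hst
  omega

/-- All partial `G`-sums on the moved interval are odd. -/
lemma step_odd_psum (hp : IsPartition f) (hst : IsStep ε f r s) :
    ∀ k, r + 1 ≤ k → k ≤ s → Odd (psum f k + ε * k) := by
  intro k hk1 hk2
  induction k, hk1 using Nat.le_induction with
  | base => exact hst.1.2
  | succ k hk ih =>
    have hks : k < s := by omega
    have hok := ih (by omega)
    have hrun := step_run hp hst k hk hks
    have hfirst := step_first hst (by omega)
    have hoddr := step_odd_inc hp hst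
    have heq : psum f (k+1) + ε * (k+1) = (psum f k + ε * k) + (f k + ε) := by
      rw [psum_succ]; ring
    rw [heq]
    rw [Nat.odd_iff] at hok hoddr ⊢
    rw [hrun, hfirst] at *
    omega

lemma step_s_le_numParts (hp : IsPartition f) (hev : Even (size f))
    (hst : IsStep ε f r s) : s ≤ numParts f := by
  have hd := step_drop hst
  by_cases h1 : f (r+1) = 0
  · -- then s = r + 1 ≤ numParts
    have hz : ∀ i, r + 1 ≤ i → f i = 0 := by
      intro i hi
      have := hp.1 hi
      omega
    have hsz : size f = psum f (r+1) := size_eq_psum hz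
    have hodd := hst.1.2
    have hεodd : Odd ε := by
      rw [← hsz] at hodd
      rw [Nat.odd_iff] at hodd
      rw [Nat.even_iff] at hev
      rw [Nat.odd_iff]
      rcases Nat.even_or_odd ε with h | h
      · rw [Nat.even_iff] at h
        have : ε * (r+1) % 2 = 0 := by
          rw [Nat.mul_mod, h]; simp
        omega
      · rwa [Nat.odd_iff] at h
    have hfr : Even (f r) := by
      have := step_odd_inc hp hst
      rw [Nat.odd_iff] at this hεodd
      rw [Nat.even_iff]
      omega
    have hfr2 : 2 ≤ f r := by
      rw [Nat.even_iff] at hfr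
      omega
    have hQ : Qc f r (r+1) := by
      refine ⟨by omega, ?_⟩
      have h3 : r + 1 - 1 = r := by omega
      rw [h3, if_pos rfl, h1]
      omega
    have hs : s ≤ r + 1 := by
      by_contra h
      exact hst.2.2.2 (r+1) (by omega) hQ
    have : r < numParts f := (pos_iff_lt_numParts hp r).mp (by omega)
    omega
  · obtain ⟨j, hj1, hj2⟩ := exists_drop hp (show 0 < f (r+1) by omega)
    have hQ : Qc f r (j+1) := by
      refine ⟨by omega, ?_⟩
      have h3 : j + 1 - 1 = j := by omega
      rw [h3, if_neg (by omega)]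
      omega
    have hs : s ≤ j + 1 := by
      by_contra h
      exact hst.2.2.2 (j+1) (by omega) hQ
    have : j < numParts f := (pos_iff_lt_numParts hp j).mp (by omega)
    omega

lemma move_psum (hrs : r < s) (hfr : 1 ≤ f r) (k : ℕ) :
    psum (move f r s) k + (if r < k ∧ k ≤ s then 1 else 0) = psum f k := by
  induction k with
  | zero => simp [psum]
  | succ k ih =>
    rw [psum_succ, psum_succ]
    simp only [move]
    by_cases hkr : k = r
    · subst hkr
      rw [if_pos rfl]
      split_ifs at ih ⊢ <;> omega
    · rw [if_neg hkr]
      by_cases hks : k = s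
      · subst hks
        rw [if_pos rfl]
        split_ifs at ih ⊢ <;> omega
      · rw [if_neg hks]
        split_ifs at ih ⊢ <;> omega

lemma move_antitone (hp : IsPartition f) (hst : IsStep ε f r s) :
    Antitone (move f r s) := by
  have hrs : r < s := step_rs hst
  have hd : f (r+1) < f r := step_drop hst
  have hQ := step_Q hst
  apply antitone_nat_of_succ_le
  intro i
  have ha : f (i+1) ≤ f i := hp.1 (Nat.le_succ i)
  simp only [move]
  rcases lt_trichotomy i r with h | h | h
  · rw [if_neg (by omega : ¬ i = r), if_neg (by omega : ¬ i = s)]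
    by_cases h2 : i + 1 = r
    · rw [if_pos h2]; omega
    · rw [if_neg h2, if_neg (by omega : ¬ i + 1 = s)]; omega
  · rw [if_pos h]
    by_cases h2 : i + 1 = s
    · rw [if_neg (by omega : ¬ i + 1 = r), if_pos h2]
      have h6 : (if s - 1 = r then 1 else 0) = 1 := if_pos (by omega)
      rw [h6] at hQ
      have h5 : s - 1 = r := by omega
      rw [h5] at hQ
      rw [← h2] at hQ
      rw [h] at hQ ⊢
      omega
    · rw [if_neg (by omega : ¬ i + 1 = r), if_neg h2]
      rw [h]
      omega
  · rw [if_neg (by omega : ¬ i = r)]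
    by_cases h2 : i = s
    · rw [if_pos h2, if_neg (by omega : ¬ i + 1 = r), if_neg (by omega : ¬ i + 1 = s)]
      omega
    · rw [if_neg h2, if_neg (by omega : ¬ i + 1 = r)]
      by_cases h3 : i + 1 = s
      · rw [if_pos h3]
        have h6 : (if s - 1 = r then 1 else 0) = 0 := if_neg (by omega)
        rw [h6] at hQ
        have h5 : s - 1 = i := by omega
        rw [h5] at hQ
        rw [← h3] at hQ
        omega
      · rw [if_neg h3]
        exact ha

lemma move_partition (hp : IsPartition f) (hst : IsStep ε f r s) :
    IsPartition (move f r s) := by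
  refine ⟨move_antitone hp hst, ?_⟩
  obtain ⟨N, hN⟩ := hp.2
  refine ⟨max N (s+1), fun i hi => ?_⟩
  have hiN : N ≤ i := le_trans (le_max_left _ _) hi
  have his : s + 1 ≤ i := le_trans (le_max_right _ _) hi
  have hrs := step_rs hst
  simp only [move]
  rw [if_neg (by omega : ¬ i = r), if_neg (by omega : ¬ i = s)]
  exact hN i hiN

lemma move_size (hp : IsPartition f) (hst : IsStep ε f r s) :
    size (move f r s) = size f := by
  obtain ⟨N, hN⟩ := hp.2
  set K := max N (s+1) with hK
  have hrs := step_rs hst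
  have hKN : N ≤ K := le_max_left _ _
  have hKs : s + 1 ≤ K := le_max_right _ _
  have hz : ∀ i, K ≤ i → f i = 0 := fun i hi => hN i (by omega)
  have hz' : ∀ i, K ≤ i → move f r s i = 0 := by
    intro i hi
    simp only [move]
    rw [if_neg (by omega : ¬ i = r), if_neg (by omega : ¬ i = s)]
    exact hz i hi
  rw [size_eq_psum hz, size_eq_psum hz']
  have := move_psum (step_rs hst) (show 1 ≤ f r by have := step_drop hst; omega) K
  rw [if_neg (by omega : ¬ (r < K ∧ K ≤ s))] at this
  omega

lemma move_dom (hp : IsPartition f) (hst : IsStep ε f r s) :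
    Dom (move f r s) f := by
  refine ⟨move_size hp hst, fun k => ?_⟩
  have := move_psum (step_rs hst) (show 1 ≤ f r by have := step_drop hst; omega) k
  omega

lemma move_mea_lt (hp : IsPartition f) (hst : IsStep ε f r s) :
    mea (move f r s) < mea f := by
  have hfr : 1 ≤ f r := by have := step_drop hst; omega
  have hrs := step_rs hst
  rw [mea, mea, move_size hp hst]
  apply Finset.sum_lt_sum
  · intro k _
    have := move_psum (step_rs hst) hfr k
    omega
  · refine ⟨r+1, ?_, ?_⟩
    · rw [Finset.mem_range]
      have h1 : r < numParts f := (pos_iff_lt_numParts hp r).mp (by omega)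
      have h2 := numParts_le_size hp
      omega
    · have := move_psum (step_rs hst) hfr (r+1)
      rw [if_pos (by constructor <;> omega : r < r + 1 ∧ r + 1 ≤ s)] at this
      omega

end StepFacts
section Transfer

variable {ε : ℕ} {f h : ℕ → ℕ} {r s : ℕ}

lemma step_eq_propagate (hp : IsPartition f) (hst : IsStep ε f r s)
    (hT : TypeW ε h) (hD : Dom h f) {k : ℕ}
    (hrk : r < k) (hks : k ≤ s) (heq : psum h k = psum f k) :
    f (k-1) = f k ∧ psum h (k+1) = psum f (k+1) := by
  have hodd : Odd (psum f k + ε * k) := step_odd_psum hp hst k (by omega) hks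
  have hoddh : Odd (psum h k + ε * k) := by rw [heq]; exact hodd
  have hk1 : k - 1 + 1 = k := by omega
  have hnd : h k = h (k-1) := by
    have hcond := hT.2.2 (k-1)
    rw [hk1] at hcond
    rcases Nat.lt_or_ge (h k) (h (k-1)) with hlt | hge
    · exfalso
      have := hcond hlt
      rw [Nat.even_iff] at this
      rw [Nat.odd_iff] at hoddh
      omega
    · exact le_antisymm (hT.1.1 (show k - 1 ≤ k by omega)) hge
  have e1 : psum h (k-1) + h (k-1) = psum h k := by
    conv_rhs => rw [← hk1]
    rw [psum_succ]
  have e2 : psum f (k-1) + f (k-1) = psum f k := by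
    conv_rhs => rw [← hk1]
    rw [psum_succ]
  have d1 : psum h (k-1) ≤ psum f (k-1) := hD.2 (k-1)
  have e3 : psum h (k+1) = psum h k + h k := psum_succ h k
  have e4 : psum f (k+1) = psum f k + f k := psum_succ f k
  have d2 : psum h (k+1) ≤ psum f (k+1) := hD.2 (k+1)
  have haf : f k ≤ f (k-1) := hp.1 (show k - 1 ≤ k by omega)
  constructor
  · omega
  · omega

lemma step_eq_s_false (hp : IsPartition f) (hst : IsStep ε f r s)
    (hT : TypeW ε h) (hD : Dom h f) (heq : psum h s = psum f s) : False := by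
  have hrs := step_rs hst
  have hprop := step_eq_propagate hp hst hT hD hrs le_rfl heq
  have hQ := step_Q hst
  have h2 : f s + 1 ≤ f (s-1) := le_trans hQ (Nat.sub_le _ _)
  omega

lemma step_no_eq (hp : IsPartition f) (hst : IsStep ε f r s)
    (hT : TypeW ε h) (hD : Dom h f) :
    ∀ k, r < k → k ≤ s → psum h k ≠ psum f k := by
  have main : ∀ m k, k = s - m → r < k → psum h k = psum f k → False := by
    intro m
    induction m with
    | zero =>
      intro k hk hrk heq
      have hks : k = s := by omega
      rw [hks] at heq
      exact step_eq_s_false hp hst hT hD heq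
    | succ m ih =>
      intro k hk hrk heq
      by_cases hks : k = s
      · rw [hks] at heq
        exact step_eq_s_false hp hst hT hD heq
      · have hlt : k < s := by omega
        have hprop := step_eq_propagate hp hst hT hD hrk (by omega) heq
        exact ih (k+1) (by omega) (by omega) hprop.2
  intro k hk1 hk2 heq
  exact main (s - k) k (by omega) hk1 heq

lemma dom_move_of_typeW (hp : IsPartition f) (hst : IsStep ε f r s)
    (hT : TypeW ε h) (hD : Dom h f) : Dom h (move f r s) := by
  have hfr : 1 ≤ f r := by have := step_drop hst; omega
  have hrs := step_rs hst
  refine ⟨hD.1.trans (move_size hp hst).symm, fun k => ?_⟩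
  have hmp := move_psum hrs hfr k
  have hdk := hD.2 k
  by_cases hk : r < k ∧ k ≤ s
  · have hne : psum h k ≠ psum f k := step_no_eq hp hst hT hD k hk.1 hk.2
    rw [if_pos hk] at hmp
    omega
  · rw [if_neg hk] at hmp
    omega

lemma isCW_move_iff (hp : IsPartition f) (hst : IsStep ε f r s) {c : ℕ → ℕ} :
    IsCW ε (move f r s) c ↔ IsCW ε f c := by
  constructor
  · rintro ⟨hT, hDom, hmax⟩
    exact ⟨hT, dom_trans hDom (move_dom hp hst),
      fun h hTh hDh => hmax h hTh (dom_move_of_typeW hp hst hTh hDh)⟩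
  · rintro ⟨hT, hDom, hmax⟩
    exact ⟨hT, dom_move_of_typeW hp hst hT hDom,
      fun h hTh hDh => hmax h hTh (dom_trans hDh (move_dom hp hst))⟩

lemma step_exists (hp : IsPartition f) (hev : Even (size f))
    (hbad : ∃ k, IsBad ε f k) : ∃ r s, IsStep ε f r s := by
  classical
  obtain ⟨r, hbr, hmin⟩ : ∃ r, IsBad ε f r ∧ ∀ k, k < r → ¬ IsBad ε f k :=
    ⟨Nat.find hbad, Nat.find_spec hbad, fun k hk => Nat.find_min hbad hk⟩
  have hQex : ∃ j, Qc f r j := by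
    by_cases h1 : f (r+1) = 0
    · have hz : ∀ i, r + 1 ≤ i → f i = 0 := fun i hi => by have := hp.1 hi; omega
      have hsz : size f = psum f (r+1) := size_eq_psum hz
      have hodd := hbr.2
      have hoddiff := odd_inc_of_minbad hp hbr hmin
      have hfr2 : 2 ≤ f r := by
        rw [← hsz] at hodd
        rw [Nat.odd_iff] at hodd hoddiff
        rw [Nat.even_iff] at hev
        have hd := hbr.1
        rcases Nat.even_or_odd ε with hε | hε
        · exfalso
          rw [Nat.even_iff] at hε
          have hmod : ε * (r+1) % 2 = 0 := by rw [Nat.mul_mod, hε]; simp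
          omega
        · rw [Nat.odd_iff] at hε
          omega
      refine ⟨r+1, ⟨by omega, ?_⟩⟩
      have h3 : r + 1 - 1 = r := by omega
      rw [h3, if_pos rfl, h1]
      omega
    · obtain ⟨j, hj1, hj2⟩ := exists_drop hp (show 0 < f (r+1) by omega)
      refine ⟨j+1, ⟨by omega, ?_⟩⟩
      have h3 : j + 1 - 1 = j := by omega
      rw [h3, if_neg (by omega)]
      omega
  exact ⟨r, Nat.find hQex, hbr, hmin, Nat.find_spec hQex, fun j hj => Nat.find_min hQex hj⟩

lemma isCW_self {ε : ℕ} {f : ℕ → ℕ} (hT : TypeW ε f) : IsCW ε f f :=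
  ⟨hT, dom_refl f, fun _ _ hd => hd⟩

lemma isCW_unique {ε : ℕ} {d c1 c2 : ℕ → ℕ} (h1 : IsCW ε d c1) (h2 : IsCW ε d c2) :
    c1 = c2 :=
  dom_antisymm (h2.2.2 c1 h1.1 h1.2.1) (h1.2.2 c2 h2.1 h2.2.1)

lemma exists_isCW (ε : ℕ) (f : ℕ → ℕ) (hp : IsPartition f) (hev : Even (size f)) :
    ∃ c, IsCW ε f c := by
  have main : ∀ N g, mea g ≤ N → IsPartition g → Even (size g) → ∃ c, IsCW ε g c := by
    intro N
    induction N using Nat.strong_induction_on with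
    | _ N ih =>
      intro g hN hpg hevg
      by_cases hbad : ∃ k, IsBad ε g k
      · obtain ⟨r, s, hst⟩ := step_exists hpg hevg hbad
        have hlt : mea (move g r s) < mea g := move_mea_lt hpg hst
        have hp' := move_partition hpg hst
        have hev' : Even (size (move g r s)) := by rw [move_size hpg hst]; exact hevg
        obtain ⟨c, hc⟩ := ih (mea (move g r s)) (by omega) (move g r s) le_rfl hp' hev'
        exact ⟨c, (isCW_move_iff hpg hst).mp hc⟩
      · push_neg at hbad
        exact ⟨g, isCW_self (typeW_of_no_bad hpg hevg hbad)⟩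
  exact main (mea f) f le_rfl hp hev

end Transfer
section Char

variable {f : ℕ → ℕ}

lemma level_finite (hp : IsPartition f) {q : ℕ} (hq : 1 ≤ q) : {i | q ≤ f i}.Finite :=
  Set.Finite.subset (parts_finite hp) (fun i hi => by
    simp only [Set.mem_setOf_eq] at *; omega)

noncomputable def nlev (f : ℕ → ℕ) (q : ℕ) : ℕ := {i | q ≤ f i}.ncard

lemma mem_lev_iff (hp : IsPartition f) {q : ℕ} (hq : 1 ≤ q) (i : ℕ) :
    q ≤ f i ↔ i < nlev f q :=
  lower_mem_iff (level_finite hp hq) (fun i j hij hj => le_trans hj (hp.1 hij)) i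

lemma nlev_mono (hp : IsPartition f) {q : ℕ} (hq : 1 ≤ q) : nlev f (q+1) ≤ nlev f q :=
  Set.ncard_le_ncard (fun i hi => by simp only [Set.mem_setOf_eq] at *; omega)
    (level_finite hp hq)

lemma mult_eq_nlev (hp : IsPartition f) {p : ℕ} (hp1 : 1 ≤ p) :
    mult f p = nlev f p - nlev f (p+1) := by
  rw [mult]
  have hss : {i | p + 1 ≤ f i} ⊆ {i | p ≤ f i} := fun i hi => by
    simp only [Set.mem_setOf_eq] at *; omega
  have hset : {i | f i = p} = {i | p ≤ f i} \ {i | p + 1 ≤ f i} := by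
    ext i; simp only [Set.mem_setOf_eq, Set.mem_diff]; omega
  rw [hset, Set.ncard_diff hss (level_finite hp (show (1:ℕ) ≤ p + 1 by omega))]
  rfl

lemma typeW_iff_mult (ε : ℕ) (f : ℕ → ℕ) :
    TypeW ε f ↔ (IsPartition f ∧ Even (size f) ∧
      ∀ p, 0 < p → Odd (p + ε) → Even (mult f p)) := by
  constructor
  · rintro ⟨hp, hev, hdrop⟩
    refine ⟨hp, hev, fun p hp0 hpε => ?_⟩
    have E : ∀ q, 1 ≤ q → Even (psum f (nlev f q) + ε * nlev f q) := by
      intro q hq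
      rcases Nat.eq_zero_or_pos (nlev f q) with h0 | h0
      · rw [h0]; simp [psum]
      · have hk1 : nlev f q - 1 + 1 = nlev f q := by omega
        have hd : f (nlev f q - 1 + 1) < f (nlev f q - 1) := by
          have h1 : q ≤ f (nlev f q - 1) := (mem_lev_iff hp hq _).mpr (by omega)
          have h2 : ¬ q ≤ f (nlev f q - 1 + 1) := fun hc => by
            have := (mem_lev_iff hp hq _).mp hc; omega
          omega
        have := hdrop (nlev f q - 1) hd
        rwa [hk1] at this
    have hle : nlev f (p+1) ≤ nlev f p := nlev_mono hp hp0
    obtain ⟨t, ht⟩ : ∃ t, nlev f p = nlev f (p+1) + t :=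
      ⟨nlev f p - nlev f (p+1), by omega⟩
    have hmult : mult f p = t := by rw [mult_eq_nlev hp hp0, ht]; omega
    have hsum : psum f (nlev f p) = psum f (nlev f (p+1)) + t * p := by
      rw [ht, psum, psum,
        ← Finset.sum_range_add_sum_Ico f (show nlev f (p+1) ≤ nlev f (p+1) + t by omega)]
      have hc : ∀ j ∈ Finset.Ico (nlev f (p+1)) (nlev f (p+1) + t), f j = p := by
        intro j hj
        rw [Finset.mem_Ico] at hj
        have h1 : p ≤ f j := (mem_lev_iff hp hp0 j).mpr (by omega)
        have h2 : ¬ (p + 1 ≤ f j) := fun hc2 => by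
          have := (mem_lev_iff hp (by omega : 1 ≤ p + 1) j).mp hc2; omega
        omega
      rw [Finset.sum_congr rfl hc, Finset.sum_const]
      simp [mul_comm]
    have E1 := E p hp0
    have E2 := E (p+1) (by omega)
    have heq : psum f (nlev f p) + ε * nlev f p
        = (psum f (nlev f (p+1)) + ε * nlev f (p+1)) + t * (p + ε) := by
      rw [hsum, ht]; ring
    have heven : Even (t * (p + ε)) := by
      rw [heq] at E1
      rw [Nat.even_iff] at E1 E2 ⊢
      omega
    rw [hmult]
    rcases Nat.even_mul.mp heven with h | h
    · exact h
    · exfalso; rw [Nat.odd_iff] at hpε; rw [Nat.even_iff] at h; omega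
  · rintro ⟨hp, hev, hmult⟩
    refine ⟨hp, hev, fun k hk => ?_⟩
    have hmaps : ∀ i ∈ Finset.range (k+1), f i ∈ Finset.Icc (f (k+1) + 1) (f 0) := by
      intro i hi
      rw [Finset.mem_range] at hi
      rw [Finset.mem_Icc]
      refine ⟨?_, hp.1 (Nat.zero_le i)⟩
      have : f k ≤ f i := hp.1 (by omega)
      omega
    have hfib := Finset.sum_fiberwise_of_maps_to hmaps (fun i => f i + ε)
    have hL : ∑ i ∈ Finset.range (k+1), (f i + ε) = psum f (k+1) + ε * (k+1) := by
      rw [Finset.sum_add_distrib, psum]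
      simp [mul_comm]
    have hterm : ∀ p ∈ Finset.Icc (f (k+1) + 1) (f 0),
        (∑ i ∈ (Finset.range (k+1)).filter (fun i => f i = p), (f i + ε))
          = (p + ε) * mult f p := by
      intro p hpmem
      rw [Finset.mem_Icc] at hpmem
      have hset : {i | f i = p}
          = (((Finset.range (k+1)).filter (fun i => f i = p) : Finset ℕ) : Set ℕ) := by
        ext i
        simp only [Set.mem_setOf_eq, Finset.coe_filter, Finset.mem_range]
        constructor
        · intro hfi
          refine ⟨?_, hfi⟩
          by_contra hik
          have : f i ≤ f (k+1) := hp.1 (by omega)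
          omega
        · exact fun h => h.2
      have hcard : mult f p = ((Finset.range (k+1)).filter (fun i => f i = p)).card := by
        rw [mult, hset, Set.ncard_coe_finset]
      have hcongr : ∀ i ∈ (Finset.range (k+1)).filter (fun i => f i = p),
          f i + ε = p + ε := by
        intro i hi
        rw [Finset.mem_filter] at hi
        rw [hi.2]
      rw [Finset.sum_congr rfl hcongr, Finset.sum_const, hcard]
      simp [mul_comm]
    rw [Finset.sum_congr rfl hterm] at hfib
    have hevensum : Even (∑ p ∈ Finset.Icc (f (k+1) + 1) (f 0), (p + ε) * mult f p) := by
      rw [even_iff_two_dvd]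
      refine Finset.dvd_sum (fun p hpmem => ?_)
      rw [Finset.mem_Icc] at hpmem
      rcases Nat.even_or_odd (p + ε) with h | h
      · exact Dvd.dvd.mul_right (even_iff_two_dvd.mp h) _
      · exact Dvd.dvd.mul_left (even_iff_two_dvd.mp (hmult p (by omega) h)) _
    rw [← hL, ← hfib]
    exact hevensum

lemma typeW0_iff (f : ℕ → ℕ) : TypeW 0 f ↔ IsTypeC f := by
  rw [typeW_iff_mult, IsTypeC]
  constructor
  · rintro ⟨h1, h2, h3⟩
    refine ⟨h1, h2, fun p hpo => ?_⟩
    have hp0 : 0 < p := by rw [Nat.odd_iff] at hpo; omega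
    exact h3 p hp0 (by simpa using hpo)
  · rintro ⟨h1, h2, h3⟩
    exact ⟨h1, h2, fun p _ hpo => h3 p (by simpa using hpo)⟩

lemma typeW1_iff (f : ℕ → ℕ) : TypeW 1 f ↔ IsTypeD f := by
  rw [typeW_iff_mult, IsTypeD]
  constructor
  · rintro ⟨h1, h2, h3⟩
    refine ⟨h1, h2, fun p hp0 hpe => ?_⟩
    refine h3 p hp0 ?_
    rw [Nat.even_iff] at hpe
    rw [Nat.odd_iff]
    omega
  · rintro ⟨h1, h2, h3⟩
    refine ⟨h1, h2, fun p hp0 hpo => ?_⟩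
    refine h3 p hp0 ?_
    rw [Nat.odd_iff] at hpo
    rw [Nat.even_iff]
    omega

end Char
section Comm

/-- Add a full first column of height `a2`. -/
def Phi (a2 : ℕ) (f : ℕ → ℕ) : ℕ → ℕ := fun i => if i < a2 then f i + 1 else 0

variable {a2 : ℕ} {f : ℕ → ℕ}

lemma phi_partition (hp : IsPartition f) (hle : size f ≤ a2) : IsPartition (Phi a2 f) := by
  constructor
  · apply antitone_nat_of_succ_le
    intro i
    simp only [Phi]
    by_cases h1 : i + 1 < a2
    · rw [if_pos h1, if_pos (by omega)]
      have : f (i+1) ≤ f i := hp.1 (by omega)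
      omega
    · rw [if_neg h1]
      exact Nat.zero_le _
  · exact ⟨a2, fun i hi => by simp only [Phi]; rw [if_neg (by omega)]⟩

lemma part_zero_ge (hp : IsPartition f) (hle : size f ≤ a2) {i : ℕ} (hi : a2 ≤ i) :
    f i = 0 :=
  part_eq_zero hp (by have := numParts_le_size hp; omega)

lemma phi_psum (hp : IsPartition f) (hle : size f ≤ a2) (k : ℕ) :
    psum (Phi a2 f) k = psum f k + min k a2 := by
  induction k with
  | zero => simp [psum]
  | succ k ih =>
    rw [psum_succ, psum_succ, ih]
    simp only [Phi]
    by_cases h1 : k < a2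
    · rw [if_pos h1]
      omega
    · rw [if_neg h1]
      have hf : f k = 0 := part_zero_ge hp hle (by omega)
      omega

lemma phi_size (hp : IsPartition f) (hle : size f ≤ a2) :
    size (Phi a2 f) = size f + a2 := by
  have hz : ∀ i, a2 ≤ i → Phi a2 f i = 0 := fun i hi => by
    simp only [Phi]; rw [if_neg (by omega)]
  have hz' : ∀ i, a2 ≤ i → f i = 0 := fun i hi => part_zero_ge hp hle hi
  rw [size_eq_psum hz, size_eq_psum hz', phi_psum hp hle a2]
  simp

lemma phi_bad_iff (hp : IsPartition f) (hev : Even (size f)) (hle : size f ≤ a2)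
    (hA : Even a2) (k : ℕ) : IsBad 0 (Phi a2 f) k ↔ IsBad 1 f k := by
  rcases lt_trichotomy (k+1) a2 with h | h | h
  · have hdrop_iff : (Phi a2 f (k+1) < Phi a2 f k) ↔ f (k+1) < f k := by
      simp only [Phi]
      rw [if_pos h, if_pos (by omega)]
      omega
    have hG : psum (Phi a2 f) (k+1) + 0 * (k+1) = psum f (k+1) + 1 * (k+1) := by
      rw [phi_psum hp hle]
      have : min (k+1) a2 = k + 1 := by omega
      omega
    rw [IsBad, IsBad, hdrop_iff, hG]
  · -- k + 1 = a2 : both sides are not bad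
    have hsz : size f = psum f (k+1) := size_eq_psum (fun i hi => part_zero_ge hp hle (by omega))
    constructor
    · rintro ⟨hd, ho⟩
      exfalso
      rw [phi_psum hp hle] at ho
      have hmin : min (k+1) a2 = a2 := by omega
      rw [hmin] at ho
      rw [Nat.odd_iff] at ho
      rw [Nat.even_iff] at hev hA
      rw [hsz] at hev
      omega
    · rintro ⟨hd, ho⟩
      exfalso
      -- f k ≥ 1 with k = a2 - 1 forces all parts 1 and numParts = a2 = size f
      have hfk : 1 ≤ f k := by omega
      have hnp : a2 ≤ numParts f := by
        have := (pos_iff_lt_numParts hp k).mp hfk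
        omega
      have hnps : numParts f = size f := by
        have := numParts_le_size hp
        omega
      have hps : psum f (k+1) ≥ k + 1 := by
        have hall : ∀ i ∈ Finset.range (k+1), 1 ≤ f i := by
          intro i hi
          rw [Finset.mem_range] at hi
          exact (pos_iff_lt_numParts hp i).mpr (by omega)
        calc k + 1 = ∑ _i ∈ Finset.range (k+1), 1 := by simp
        _ ≤ psum f (k+1) := Finset.sum_le_sum hall
      have hple : psum f (k+1) ≤ size f := psum_le_size hp (k+1)
      -- so psum f (k+1) = size f = a2
      rw [Nat.odd_iff] at ho
      rw [Nat.even_iff] at hev hA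
      rw [hsz] at hev
      omega
  · -- k + 1 > a2 : no drops on either side
    constructor
    · rintro ⟨hd, _⟩
      exfalso
      simp only [Phi] at hd
      rw [if_neg (by omega), if_neg (by omega)] at hd
      omega
    · rintro ⟨hd, _⟩
      exfalso
      have h1 : f k = 0 := part_zero_ge hp hle (by omega)
      omega

lemma phi_step (hp : IsPartition f) (hev : Even (size f)) (hle : size f ≤ a2)
    (hA : Even a2) {r s : ℕ} (hst : IsStep 1 f r s) :
    IsStep 0 (Phi a2 f) r s ∧ Phi a2 (move f r s) = move (Phi a2 f) r s := by
  have hrs := step_rs hst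
  have hd := step_drop hst
  have hsn : s ≤ numParts f := step_s_le_numParts hp hev hst
  -- some part is ≥ 2
  have h2 : ∃ i, 2 ≤ f i := by
    by_contra hno
    push_neg at hno
    have hfr1 : f r = 1 := by have := hno r; omega
    have hconst : ∀ i ∈ Finset.range (r+1), f i = 1 := by
      intro i hi
      rw [Finset.mem_range] at hi
      have h3 : f r ≤ f i := hp.1 (by omega)
      have := hno i
      omega
    have hpsum : psum f (r+1) = r + 1 := by
      rw [psum, Finset.sum_congr rfl hconst]
      simp
    have hbad := hst.1.2
    rw [hpsum, Nat.odd_iff] at hbad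
    omega
  have hnp : numParts f + 1 ≤ size f := by
    obtain ⟨i, hi2⟩ := h2
    have hilt : i < numParts f := (pos_iff_lt_numParts hp i).mp (by omega)
    have hlt : ∑ _j ∈ Finset.range (numParts f), 1 < psum f (numParts f) := by
      apply Finset.sum_lt_sum
      · intro j hj
        rw [Finset.mem_range] at hj
        exact (pos_iff_lt_numParts hp j).mpr hj
      · exact ⟨i, Finset.mem_range.mpr hilt, by omega⟩
    have := psum_le_size hp (numParts f)
    simp at hlt
    omega
  have hsa : s < a2 := by omega
  have hQ := step_Q hst
  constructor
  · refine ⟨(phi_bad_iff hp hev hle hA r).mpr hst.1,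
      fun k hk hb => hst.2.1 k hk ((phi_bad_iff hp hev hle hA k).mp hb),
      ⟨hrs, ?_⟩, fun j hj hqj => hst.2.2.2 j hj ⟨hqj.1, ?_⟩⟩
    · -- Qc (Phi a2 f) r s second component
      simp only [Phi]
      rw [if_pos (by omega : s < a2), if_pos (by omega : s - 1 < a2)]
      rcases eq_or_ne (s-1) r with he' | he'
      · rw [if_pos he'] at hQ ⊢
        omega
      · rw [if_neg he'] at hQ ⊢
        omega
    · -- Qc f r j second component from Qc (Phi a2 f) r j
      have hrj : r < j := hqj.1
      have hq2 := hqj.2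
      simp only [Phi] at hq2
      rw [if_pos (by omega : j < a2), if_pos (by omega : j - 1 < a2)] at hq2
      rcases eq_or_ne (j-1) r with he' | he'
      · rw [if_pos he'] at hq2 ⊢
        omega
      · rw [if_neg he'] at hq2 ⊢
        omega
  · funext i
    simp only [Phi, move]
    by_cases hia : i < a2
    · rw [if_pos hia]
      by_cases hir : i = r
      · rw [if_pos hir, if_pos hir, if_pos hia]
        subst hir
        omega
      · rw [if_neg hir, if_neg hir]
        by_cases his : i = s
        · rw [if_pos his, if_pos his, if_pos hia]
        · rw [if_neg his, if_neg his, if_pos hia]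
    · rw [if_neg hia, if_neg (by omega : ¬ i = r), if_neg (by omega : ¬ i = s),
        if_neg hia]

lemma comm_main (a2 : ℕ) (hA : Even a2) :
    ∀ N f g, mea f ≤ N → IsPartition f → Even (size f) → size f ≤ a2 →
      IsCW 1 f g → IsCW 0 (Phi a2 f) (Phi a2 g) := by
  intro N
  induction N using Nat.strong_induction_on with
  | _ N ih =>
    intro f g hN hp hev hle hg
    by_cases hbad : ∃ k, IsBad 1 f k
    · obtain ⟨r, s, hst⟩ := step_exists hp hev hbad
      obtain ⟨hst0, hmv⟩ := phi_step hp hev hle hA hst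
      have hp' := move_partition hp hst
      have hev' : Even (size (move f r s)) := by rw [move_size hp hst]; exact hev
      have hle' : size (move f r s) ≤ a2 := by rw [move_size hp hst]; exact hle
      have hg' : IsCW 1 (move f r s) g := (isCW_move_iff hp hst).mpr hg
      have hlt := move_mea_lt hp hst
      have hcomm := ih (mea (move f r s)) (by omega) (move f r s) g le_rfl hp' hev' hle' hg'
      rw [hmv] at hcomm
      exact (isCW_move_iff (phi_partition hp hle) hst0).mp hcomm
    · push_neg at hbad
      have hTf : TypeW 1 f := typeW_of_no_bad hp hev hbad
      have hgf : g = f := isCW_unique hg (isCW_self hTf)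
      rw [hgf]
      apply isCW_self
      refine typeW_of_no_bad (phi_partition hp hle) ?_ ?_
      · rw [phi_size hp hle]
        exact hev.add hA
      · intro k hb
        exact hbad k ((phi_bad_iff hp hev hle hA k).mp hb)

end Comm
end Stmt10

/-- for integers `a ≥ n ≥ 0` and a partition `e` of size `2n+2a`
with exactly `2a` parts, the C-collapse of `e` has exactly `2a` parts, and
`∇(C-collapse of e)` equals the D-collapse of `∇(e)`. -/
theorem stmt_10 (a n : ℕ) (han : n ≤ a) (e : ℕ → ℕ)
    (he : IsPartition e) (hsize : size e = 2 * n + 2 * a) (hparts : numParts e = 2 * a) :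
    numParts (collapseC e) = 2 * a ∧ delCol (collapseC e) = collapseD (delCol e) := by
  classical
  set f := delCol e with hf
  have hepos : ∀ i, i < 2*a → 1 ≤ e i := fun i hi =>
    (Stmt10.pos_iff_lt_numParts he i).mpr (by omega)
  have hez : ∀ i, 2*a ≤ i → e i = 0 := fun i hi =>
    Stmt10.part_eq_zero he (by omega)
  have hfp : IsPartition f := by
    constructor
    · intro i j hij
      simp only [hf, delCol]
      have := he.1 hij
      omega
    · obtain ⟨N, hN⟩ := he.2
      exact ⟨N, fun i hi => by simp [hf, delCol, hN i hi]⟩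
  have hfz : ∀ i, 2*a ≤ i → f i = 0 := fun i hi => by simp [hf, delCol, hez i hi]
  have hpsum_e : psum e (2*a) = 2*n + 2*a := by
    rw [← hsize]
    exact (Stmt10.size_eq_psum hez).symm
  have hfe : ∀ i ∈ Finset.range (2*a), f i + 1 = e i := by
    intro i hi
    rw [Finset.mem_range] at hi
    have := hepos i hi
    simp only [hf, delCol]
    omega
  have hpsum_f : psum f (2*a) + 2*a = psum e (2*a) := by
    calc psum f (2*a) + 2*a = ∑ i ∈ Finset.range (2*a), (f i + 1) := by
          rw [psum, Finset.sum_add_distrib]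
          simp
    _ = psum e (2*a) := Finset.sum_congr rfl hfe
  have hsf : size f = 2*n := by
    rw [Stmt10.size_eq_psum hfz]
    omega
  have hevf : Even (size f) := by rw [hsf]; exact ⟨n, by ring⟩
  have hlef : size f ≤ 2*a := by omega
  have hA : Even (2*a) := ⟨a, by ring⟩
  have hplug : Stmt10.Phi (2*a) f = e := by
    funext i
    simp only [Stmt10.Phi]
    by_cases hi : i < 2*a
    · rw [if_pos hi]
      exact hfe i (Finset.mem_range.mpr hi)
    · rw [if_neg hi]
      exact (hez i (by omega)).symm
  obtain ⟨g, hg⟩ := Stmt10.exists_isCW 1 f hfp hevf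
  have hcomm := Stmt10.comm_main (2*a) hA (Stmt10.mea f) f g le_rfl hfp hevf hlef hg
  rw [hplug] at hcomm
  have hCc : IsCollapse IsTypeC e (Stmt10.Phi (2*a) g) := by
    obtain ⟨hT, hD, hmax⟩ := hcomm
    exact ⟨(Stmt10.typeW0_iff _).mp hT, hD,
      fun h hTh hDh => hmax h ((Stmt10.typeW0_iff h).mpr hTh) hDh⟩
  have hCd : IsCollapse IsTypeD f g := by
    obtain ⟨hT, hD, hmax⟩ := hg
    exact ⟨(Stmt10.typeW1_iff _).mp hT, hD,
      fun h hTh hDh => hmax h ((Stmt10.typeW1_iff h).mpr hTh) hDh⟩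
  have hceq : collapseC e = Stmt10.Phi (2*a) g := Stmt10.collapse_eq hCc
  have hdeq : collapseD f = g := Stmt10.collapse_eq hCd
  have hgp : IsPartition g := hg.1.1
  have hgsize : size g = 2*n := by
    have := hg.2.1.1
    omega
  have hgz : ∀ i, 2*a ≤ i → g i = 0 := fun i hi =>
    Stmt10.part_eq_zero hgp (by have := Stmt10.numParts_le_size hgp; omega)
  constructor
  · rw [hceq]
    have hset : {j | 0 < Stmt10.Phi (2*a) g j} = ↑(Finset.range (2*a)) := by
      ext j
      simp only [Set.mem_setOf_eq, Finset.coe_range, Set.mem_Iio, Stmt10.Phi]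
      by_cases hj : j < 2*a
      · rw [if_pos hj]
        omega
      · rw [if_neg hj]
        omega
    rw [numParts, hset, Set.ncard_coe_finset, Finset.card_range]
  · rw [hceq, hdeq]
    funext i
    simp only [delCol, Stmt10.Phi]
    by_cases hi : i < 2*a
    · rw [if_pos hi]
      omega
    · rw [if_neg hi]
      rw [hgz i (by omega)]
end

section
/- Let a ≥ n ≥ 0 be integers and let d be a partition of size 2n+2a. If the C-collapse of d has exactly 2a parts, then d has exactly 2a parts. -/
section Aux

lemma aux_exists_bound (f : ℕ → ℕ) (hf : IsPartition f) : ∃ m, ∀ i, 0 < f i ↔ i < m := by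
  classical
  obtain ⟨N, hN⟩ := hf.2
  have hx : ∃ j, f j = 0 := ⟨N, hN N le_rfl⟩
  refine ⟨Nat.find hx, fun i => ?_⟩
  constructor
  · intro hi
    by_contra h
    push_neg at h
    have h0 := Nat.find_spec hx
    have := hf.1 h
    omega
  · intro hi
    have := Nat.find_min hx hi
    omega

lemma aux_numParts_eq (f : ℕ → ℕ) (m : ℕ) (h : ∀ i, 0 < f i ↔ i < m) : numParts f = m := by
  have hs : {j | 0 < f j} = Set.Iio m := Set.ext fun j => h j
  rw [numParts, hs, ← Finset.coe_range, Set.ncard_coe_finset, Finset.card_range]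

lemma aux_pos_iff (f : ℕ → ℕ) (hf : IsPartition f) : ∀ i, 0 < f i ↔ i < numParts f := by
  obtain ⟨m, hm⟩ := aux_exists_bound f hf
  rw [aux_numParts_eq f m hm]
  exact hm

lemma aux_size_eq (f : ℕ → ℕ) (hf : IsPartition f) (k : ℕ) (hk : numParts f ≤ k) :
    size f = psum f k := by
  apply tsum_eq_sum
  intro i hi
  rw [Finset.mem_range] at hi
  have := aux_pos_iff f hf i
  omega

lemma aux_psum_le_size (f : ℕ → ℕ) (hf : IsPartition f) (k : ℕ) : psum f k ≤ size f := by
  rw [aux_size_eq f hf (max k (numParts f)) (le_max_right _ _)]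
  exact Finset.sum_le_sum_of_subset (Finset.range_subset_range.2 (le_max_left _ _))

lemma aux_dom_numParts (f g : ℕ → ℕ) (hf : IsPartition f) (hg : IsPartition g)
    (h : Dom f g) : numParts g ≤ numParts f := by
  by_contra hlt
  push_neg at hlt
  have h1 : psum f (numParts f) = size g := by
    rw [← h.1]; exact (aux_size_eq f hf _ le_rfl).symm
  have h2 : psum f (numParts f) ≤ psum g (numParts f) := h.2 _
  have h3 : psum g (numParts f) < psum g (numParts f + 1) := by
    unfold psum
    rw [Finset.sum_range_succ]
    have := (aux_pos_iff g hg (numParts f)).2 hlt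
    omega
  have h4 : psum g (numParts f + 1) ≤ size g := aux_psum_le_size g hg _
  omega

lemma aux_bal_sum (q r k : ℕ) :
    ∑ i ∈ Finset.range k, (if i < r then q + 1 else q) = k * q + min k r := by
  induction k with
  | zero => simp
  | succ k ih =>
    rw [Finset.sum_range_succ, ih]
    split_ifs with h <;> · simp [Nat.succ_mul]; omega

end Aux

/-- for integers `a ≥ n ≥ 0` and a partition `d` of size `2n+2a`,
if the C-collapse of `d` has exactly `2a` parts, then `d` has exactly `2a`
parts. -/
theorem stmt_11 (a n : ℕ) (han : n ≤ a) (d : ℕ → ℕ)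
    (hd : IsPartition d) (hsize : size d = 2 * n + 2 * a)
    (hcol : numParts (collapseC d) = 2 * a) :
    numParts d = 2 * a := by
  by_cases ha : a = 0
  · have hn : n = 0 := by omega
    subst ha; subst hn
    have hs0 : size d = 0 := by omega
    suffices h : numParts d = 0 by omega
    by_contra h0
    have hp := (aux_pos_iff d hd 0).2 (Nat.pos_of_ne_zero h0)
    have hse := aux_size_eq d hd (numParts d) le_rfl
    have hle : d 0 ≤ psum d (numParts d) :=
      Finset.single_le_sum (fun i _ => Nat.zero_le _)
        (Finset.mem_range.2 (Nat.pos_of_ne_zero h0))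
    omega
  · have c_ex : ∃ c, IsCollapse IsTypeC d c := by
      by_contra hne
      rw [collapseC, collapse, dif_neg hne] at hcol
      have h0 : numParts (fun _ => (0 : ℕ)) = 0 := aux_numParts_eq _ 0 (by simp)
      omega
    have hC : IsCollapse IsTypeC d (collapseC d) := by
      rw [collapseC, collapse, dif_pos c_ex]
      exact c_ex.choose_spec
    set c := collapseC d with hcdef
    have hcpart : IsPartition c := hC.1.1
    have hle1 : numParts d ≤ numParts c := aux_dom_numParts c d hcpart hd hC.2.1
    set m := numParts d with hm
    have hm0 : 0 < m := by
      by_contra h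
      push_neg at h
      have h0 : size d = 0 := by
        rw [aux_size_eq d hd 0 (by omega)]; simp [psum]
      omega
    set S := size d with hSdef
    set q := S / m with hqdef
    set r := S % m with hrdef
    have hdm : m * q + r = S := Nat.div_add_mod S m
    have hr : r < m := Nat.mod_lt _ hm0
    have hSm : m ≤ S := by
      have h1 : S = psum d m := aux_size_eq d hd m le_rfl
      have h2 : ∑ i ∈ Finset.range m, 1 ≤ psum d m := by
        apply Finset.sum_le_sum
        intro i hi
        rw [Finset.mem_range] at hi
        exact (aux_pos_iff d hd i).2 hi
      simp at h2
      omega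
    have hq : 1 ≤ q := (Nat.one_le_div_iff hm0).2 hSm
    set e : ℕ → ℕ := fun i => if i < r then q + 1 else if i < m then q else 0 with he
    have hepos : ∀ i, 0 < e i ↔ i < m := by
      intro i; simp only [he]; split_ifs <;> omega
    have hepart : IsPartition e := by
      constructor
      · intro i j hij
        simp only [he]
        split_ifs <;> omega
      · exact ⟨m, fun i hi => by simp only [he]; split_ifs <;> omega⟩
    have heNum : numParts e = m := aux_numParts_eq e m hepos
    have hpsum_e : ∀ k, k ≤ m → psum e k = k * q + min k r := by
      intro k hk
      unfold psum
      have hcong : ∀ i ∈ Finset.range k, e i = if i < r then q + 1 else q := by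
        intro i hi
        rw [Finset.mem_range] at hi
        simp only [he]
        split_ifs <;> omega
      rw [Finset.sum_congr rfl hcong, aux_bal_sum]
    have hsize_e : size e = S := by
      rw [aux_size_eq e hepart m (by omega), hpsum_e m le_rfl]
      omega
    have hSeven : ∃ s, S = s + s := ⟨n + a, by omega⟩
    have hdom_ed : Dom e d := by
      constructor
      · rw [hsize_e]
      · intro k
        by_cases hk : m ≤ k
        · have h1 : size e = psum e k := aux_size_eq e hepart k (by omega)
          have h2 : size d = psum d k := aux_size_eq d hd k (by omega)
          omega
        · push_neg at hk
          rw [hpsum_e k hk.le]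
          by_contra hcon
          push_neg at hcon
          have htail : psum d m = psum d k + ∑ i ∈ Finset.Ico k m, d i := by
            unfold psum
            rw [Finset.range_eq_Ico,
              ← Finset.sum_Ico_consecutive _ (Nat.zero_le k) hk.le, Finset.range_eq_Ico]
          have hSd : psum d m = S := (aux_size_eq d hd m le_rfl).symm
          have hub : ∑ i ∈ Finset.Ico k m, d i ≤ (m - k) * d k := by
            calc ∑ i ∈ Finset.Ico k m, d i ≤ ∑ i ∈ Finset.Ico k m, d k :=
                  Finset.sum_le_sum (fun i hi => hd.1 (Finset.mem_Ico.1 hi).1)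
              _ = (m - k) * d k := by
                  rw [Finset.sum_const, Nat.card_Ico, smul_eq_mul]
          have hlb : k * d k ≤ psum d k := by
            calc k * d k = ∑ _i ∈ Finset.range k, d k := by
                  rw [Finset.sum_const, Finset.card_range, smul_eq_mul]
              _ ≤ psum d k :=
                  Finset.sum_le_sum (fun i hi => hd.1 (le_of_lt (Finset.mem_range.1 hi)))
          have hsplit : (m - k) * q + k * q = m * q := by
            rw [← Nat.add_mul]
            congr 1
            omega
          rcases le_or_gt (d k) q with hdk | hdk
          · have hmul : (m - k) * d k ≤ (m - k) * q := Nat.mul_le_mul_left _ hdk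
            omega
          · have hmul : k * q + k ≤ k * d k := by
              have h5 := Nat.mul_le_mul_left k hdk
              rw [Nat.mul_succ] at h5
              exact h5
            omega
    have heC : IsTypeC e := by
      refine ⟨hepart, ?_, ?_⟩
      · rw [hsize_e]
        obtain ⟨s, hs⟩ := hSeven
        exact ⟨s, hs⟩
      · intro p hp
        obtain ⟨t, ht⟩ := hp
        obtain ⟨s, hs⟩ := hSeven
        by_cases h1 : p = q + 1
        · have hset : {i | e i = p} = Set.Iio r := by
            ext i
            simp only [Set.mem_setOf_eq, Set.mem_Iio, he]
            split_ifs <;> omega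
          rw [mult, hset, ← Finset.coe_range, Set.ncard_coe_finset, Finset.card_range]
          have hq2 : q = 2 * t := by omega
          have hmq : m * q = 2 * (m * t) := by rw [hq2]; ring
          exact ⟨s - m * t, by omega⟩
        · by_cases h2 : p = q
          · have hset : {i | e i = p} = Set.Ico r m := by
              ext i
              simp only [Set.mem_setOf_eq, Set.mem_Ico, he]
              split_ifs <;> omega
            rw [mult, hset, ← Finset.coe_Ico, Set.ncard_coe_finset, Nat.card_Ico]
            have hq2 : q = 2 * t + 1 := by omega
            have hmq : m * q = 2 * (m * t) + m := by rw [hq2]; ring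
            exact ⟨s - m * t - r, by omega⟩
          · have hset : {i | e i = p} = ∅ := by
              ext i
              simp only [Set.mem_setOf_eq, Set.mem_empty_iff_false, iff_false, he]
              split_ifs <;> omega
            rw [mult, hset, Set.ncard_empty]
            exact Even.zero
    have hdom_ec : Dom e c := hC.2.2 e heC hdom_ed
    have hle2 : numParts c ≤ m := heNum ▸ aux_dom_numParts e c hepart hcpart hdom_ec
    omega
end
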